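/- arXiv:1803.10953 — 3 statements merged into one kernel-verified Lean document; each statement's English description precedes it below -/
import Mathlib

section
/- Rosen-style characterization of WAML^n over finite models: a first-order L¹_n-formula α(x) is invariant under wa^n-bisimulation between finite n-models if and only if there is a WAML formula φ such that α(x) and ST_x(φ) are equivalent over all finite n-models (i.e., for every finite n-model M and world w, M ⊨ α[w] iff M ⊨ ST_x(φ)[w]). -/
namespace WAML

/-- The language of WAML: atoms, negation, conjunction, and the (diagonal) box. -/
inductive Formula : Type
  | atom : ℕ → Formula
  | neg : Formula → Formula
  | and : Formula → Formula → Formula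
  | box : Formula → Formula

namespace Formula

def imp (φ ψ : Formula) : Formula := neg (and φ (neg ψ))
def or (φ ψ : Formula) : Formula := neg (and (neg φ) (neg ψ))
def dia (φ : Formula) : Formula := neg (box (neg φ))
def bot : Formula := and (atom 0) (neg (atom 0))

/-- The set of propositional letters occurring in a formula. -/
def letters : Formula → Set ℕ
  | atom p => {p}
  | neg φ => letters φ
  | and φ ψ => letters φ ∪ letters ψ
  | box φ => letters φ

end Formula

/-- Conjunction of a list of formulas. -/
def conjList : List Formula → Formula
  | [] => Formula.neg Formula.bot
  | [φ] => φ
  | φ :: ψ :: rest => Formula.and φ (conjList (ψ :: rest))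

/-- Disjunction of a list of formulas. -/
def disjList : List Formula → Formula
  | [] => Formula.bot
  | [φ] => φ
  | φ :: ψ :: rest => Formula.or φ (disjList (ψ :: rest))

/-- ⋁_{0 ≤ i < j ≤ n} (φ_i ∧ φ_j) -/
def pairDisj (n : ℕ) (φ : Fin (n+1) → Formula) : Formula :=
  disjList (((List.finRange (n+1)).product (List.finRange (n+1))).filterMap
    (fun p => if p.1 < p.2 then some (Formula.and (φ p.1) (φ p.2)) else none))

/-- The axiom (scheme) K_n : □φ₀ ∧ ⋯ ∧ □φ_n → □⋁_{0 ≤ i < j ≤ n} (φ_i ∧ φ_j). -/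
def KnAxiom (n : ℕ) (φ : Fin (n+1) → Formula) : Formula :=
  Formula.imp (conjList ((List.finRange (n+1)).map (fun i => Formula.box (φ i))))
    (Formula.box (pairDisj n φ))

/-- A propositional tautology (including all substitution instances): a formula true under
every valuation of formulas respecting ¬ and ∧. -/
def Tautology (φ : Formula) : Prop :=
  ∀ v : Formula → Prop,
    (∀ ψ, v (Formula.neg ψ) ↔ ¬ v ψ) →
    (∀ ψ χ, v (Formula.and ψ χ) ↔ v ψ ∧ v χ) →
    v φ

/-- The proof system 𝕂_n: propositional tautologies, K_n, modus ponens, necessitation, RM. -/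
inductive KProof (n : ℕ) : Formula → Prop
  | taut {φ} : Tautology φ → KProof n φ
  | kn (φ : Fin (n+1) → Formula) : KProof n (KnAxiom n φ)
  | mp {φ ψ} : KProof n (Formula.imp φ ψ) → KProof n φ → KProof n ψ
  | nec {φ} : KProof n φ → KProof n (Formula.box φ)
  | rm {φ ψ} : KProof n (Formula.imp φ ψ) →
      KProof n (Formula.imp (Formula.box φ) (Formula.box ψ))

/-- An n-model: a nonempty set of worlds, an (n+1)-ary relation, a valuation. -/
structure NModel (n : ℕ) where
  World : Type
  nonempty : Nonempty World
  R : World → (Fin n → World) → Prop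
  V : World → ℕ → Prop

/-- Diagonal semantics. -/
def Sat {n : ℕ} (M : NModel n) : M.World → Formula → Prop
  | w, .atom p => M.V w p
  | w, .neg φ => ¬ Sat M w φ
  | w, .and φ ψ => Sat M w φ ∧ Sat M w ψ
  | w, .box φ => ∀ v : Fin n → M.World, M.R w v → ∃ i, Sat M (v i) φ

/-- wa^n-bisimulation between two n-models. -/
def IsBisim {n : ℕ} (M M' : NModel n) (Z : M.World → M'.World → Prop) : Prop :=
  (∃ w w', Z w w') ∧
  (∀ w w', Z w w' → ∀ p, M.V w p ↔ M'.V w' p) ∧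
  (∀ w w' (v : Fin n → M.World), Z w w' → M.R w v →
    ∃ v' : Fin n → M'.World, M'.R w' v' ∧ ∀ j, ∃ i, Z (v i) (v' j)) ∧
  (∀ w w' (v' : Fin n → M'.World), Z w w' → M'.R w' v' →
    ∃ v : Fin n → M.World, M.R w v ∧ ∀ i, ∃ j, Z (v i) (v' j))

/-- wa^n-bisimilarity of pointed n-models. -/
def Bisimilar {n : ℕ} (M M' : NModel n) (w : M.World) (w' : M'.World) : Prop :=
  ∃ Z, IsBisim M M' Z ∧ Z w w'

/-- Image-finiteness: each world has finitely many successor n-tuples. -/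
def ImageFinite {n : ℕ} (M : NModel n) : Prop :=
  ∀ w : M.World, {v : Fin n → M.World | M.R w v}.Finite

/-- First-order correspondence language L¹_n: formulas with free variables among Fin k
(de Bruijn style, `all` binds the last variable). -/
inductive FO (n : ℕ) : ℕ → Type
  | pred {k} : ℕ → Fin k → FO n k
  | rel {k} : (Fin (n+1) → Fin k) → FO n k
  | eq {k} : Fin k → Fin k → FO n k
  | fal {k} : FO n k
  | not {k} : FO n k → FO n k
  | and {k} : FO n k → FO n k → FO n k
  | or {k} : FO n k → FO n k → FO n k
  | imp {k} : FO n k → FO n k → FO n k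
  | all {k} : FO n (k+1) → FO n k

/-- Realization of first-order formulas in an n-model (seen as an L¹_n-structure). -/
def FO.Realize {n : ℕ} (M : NModel n) : ∀ {k}, FO n k → (Fin k → M.World) → Prop
  | _, .pred p x, a => M.V (a x) p
  | _, .rel ts, a => M.R (a (ts 0)) (fun i => a (ts i.succ))
  | _, .eq x y, a => a x = a y
  | _, .fal, _ => False
  | _, .not φ, a => ¬ FO.Realize M φ a
  | _, .and φ ψ, a => FO.Realize M φ a ∧ FO.Realize M ψ a
  | _, .or φ ψ, a => FO.Realize M φ a ∨ FO.Realize M ψ a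
  | _, .imp φ ψ, a => FO.Realize M φ a → FO.Realize M ψ a
  | _, .all φ, a => ∀ x, FO.Realize M φ (Fin.snoc a x)

/-- Quantifier rank. -/
def FO.qr {n : ℕ} : ∀ {k}, FO n k → ℕ
  | _, .pred _ _ => 0
  | _, .rel _ => 0
  | _, .eq _ _ => 0
  | _, .fal => 0
  | _, .not φ => φ.qr
  | _, .and φ ψ => max φ.qr ψ.qr
  | _, .or φ ψ => max φ.qr ψ.qr
  | _, .imp φ ψ => max φ.qr ψ.qr
  | _, .all φ => φ.qr + 1

/-- Renaming of free variables. -/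
def FO.rename {n : ℕ} : ∀ {k k'}, (Fin k → Fin k') → FO n k → FO n k'
  | _, _, f, .pred p x => .pred p (f x)
  | _, _, f, .rel ts => .rel (fun i => f (ts i))
  | _, _, f, .eq x y => .eq (f x) (f y)
  | _, _, _, .fal => .fal
  | _, _, f, .not φ => .not (φ.rename f)
  | _, _, f, .and φ ψ => .and (φ.rename f) (ψ.rename f)
  | _, _, f, .or φ ψ => .or (φ.rename f) (ψ.rename f)
  | _, _, f, .imp φ ψ => .imp (φ.rename f) (ψ.rename f)
  | _, _, f, .all φ =>
      .all (φ.rename (fun j => Fin.lastCases (Fin.last _) (fun a => (f a).castSucc) j))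

/-- A block of m universal quantifiers (binding the last m variables). -/
def FO.alls {n k : ℕ} : ∀ (m : ℕ), FO n (k + m) → FO n k
  | 0, φ => φ
  | m+1, φ => FO.alls m φ.all

/-- Disjunction of a list of first-order formulas. -/
def FO.disjList {n k : ℕ} : List (FO n k) → FO n k
  | [] => .fal
  | [φ] => φ
  | φ :: ψ :: rest => .or φ (FO.disjList (ψ :: rest))

/-- The standard translation ST_x (with x the unique free variable). -/
def ST (n : ℕ) : Formula → FO n 1
  | .atom p => .pred p 0
  | .neg φ => .not (ST n φ)
  | .and φ ψ => .and (ST n φ) (ST n ψ)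
  | .box φ =>
      let ψ := ST n φ
      FO.alls n (FO.imp
        (.rel (Fin.cases (Fin.castAdd n (0 : Fin 1)) (fun i => Fin.natAdd 1 i)))
        (FO.disjList ((List.finRange n).map
          (fun i => ψ.rename (fun _ => Fin.natAdd 1 i)))))

/-- α(x) (one free variable) is invariant under wa^n-bisimulation. -/
def BisimInvariant (n : ℕ) (α : FO n 1) : Prop :=
  ∀ (M N : NModel n) (Z : M.World → N.World → Prop) (w : M.World) (v : N.World),
    IsBisim M N Z → Z w v →
    (FO.Realize M α (fun _ => w) ↔ FO.Realize N α (fun _ => v))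

/-- α(x) is invariant under wa^n-bisimulation between finite n-models. -/
def BisimInvariantFin (n : ℕ) (α : FO n 1) : Prop :=
  ∀ (M N : NModel n) (Z : M.World → N.World → Prop) (w : M.World) (v : N.World),
    Finite M.World → Finite N.World → IsBisim M N Z → Z w v →
    (FO.Realize M α (fun _ => w) ↔ FO.Realize N α (fun _ => v))

/-- Admissible sequences for the unraveling of M around w. The first entry is
((w,…,w), 1) (index 0 in 0-based counting) and consecutive entries are related by R. -/
def GoodSeq {n : ℕ} [NeZero n] (M : NModel n) (w : M.World)
    (s : List ((Fin n → M.World) × Fin n)) : Prop :=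
  (∃ rest, s = ((fun _ => w), (0 : Fin n)) :: rest) ∧
  List.Chain' (fun a b => M.R (a.1 a.2) b.1) s

/-- The world of M corresponding to a sequence: v⃗_m[i_m] (and w for the empty list). -/
def rmap {n : ℕ} (M : NModel n) (w : M.World)
    (s : List ((Fin n → M.World) × Fin n)) : M.World :=
  match s.getLast? with
  | some a => a.1 a.2
  | none => w

/-- The unraveling M_w of M around w. -/
def Unravel {n : ℕ} [NeZero n] (M : NModel n) (w : M.World) : NModel n where
  World := { s : List ((Fin n → M.World) × Fin n) // GoodSeq M w s }
  nonempty := ⟨⟨[((fun _ => w), 0)], ⟨⟨[], rfl⟩, List.isChain_singleton _⟩⟩⟩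
  R := fun s₀ t =>
    M.R (rmap M w s₀.val) (fun i => rmap M w (t i).val) ∧
    ∀ i, ∃ a, (t i).val = s₀.val ++ [a]
  V := fun s p => M.V (rmap M w s.val) p

/-- The root ⟨((w,…,w),1)⟩ of the unraveling. -/
def unravelRoot {n : ℕ} [NeZero n] (M : NModel n) (w : M.World) :
    (Unravel M w).World :=
  ⟨[((fun _ => w), 0)], ⟨⟨[], rfl⟩, List.isChain_singleton _⟩⟩

/-- The bounded unraveling M_w|_l : the submodel of M_w of worlds of level at most l. -/
def UnravelB {n : ℕ} [NeZero n] (M : NModel n) (w : M.World) (l : ℕ) : NModel n where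
  World := { s : List ((Fin n → M.World) × Fin n) // GoodSeq M w s ∧ s.length ≤ l + 1 }
  nonempty := ⟨⟨[((fun _ => w), 0)], ⟨⟨⟨[], rfl⟩, List.isChain_singleton _⟩, by simp⟩⟩⟩
  R := fun s₀ t =>
    M.R (rmap M w s₀.val) (fun i => rmap M w (t i).val) ∧
    ∀ i, ∃ a, (t i).val = s₀.val ++ [a]
  V := fun s p => M.V (rmap M w s.val) p

/-- The root of the bounded unraveling. -/
def unravelBRoot {n : ℕ} [NeZero n] (M : NModel n) (w : M.World) (l : ℕ) :
    (UnravelB M w l).World :=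
  ⟨[((fun _ => w), 0)], ⟨⟨⟨[], rfl⟩, List.isChain_singleton _⟩, by simp⟩⟩

/-- R^c x y : y is a member of some successor tuple of x. -/
def Rc {n : ℕ} (M : NModel n) (x y : M.World) : Prop :=
  ∃ v : Fin n → M.World, M.R x v ∧ ∃ i, y = v i

/-- The undirected edge relation induced by R^c. -/
def Edge {n : ℕ} (M : NModel n) (x y : M.World) : Prop := Rc M x y ∨ Rc M y x

/-- There is an undirected R^c-path of length m from x to y. -/
def HasPath {n : ℕ} (M : NModel n) (x y : M.World) (m : ℕ) : Prop :=
  ∃ f : ℕ → M.World, f 0 = x ∧ f m = y ∧ ∀ i < m, Edge M (f i) (f (i+1))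

/-- The distance between worlds, in ℕ ∪ {ω} (ω = ⊤ if there is no path). -/
noncomputable def dist {n : ℕ} (M : NModel n) (x y : M.World) : ℕ∞ :=
  sInf {c : ℕ∞ | ∃ m : ℕ, c = (m : ℕ∞) ∧ HasPath M x y m}

/-- One literal among the letters r₁,…,r_m, i.e. the atoms 2,…,m+1. -/
def IsLit (m : ℕ) (φ : Formula) : Prop :=
  ∃ j, j < m ∧ (φ = Formula.atom (j+2) ∨ φ = Formula.neg (Formula.atom (j+2)))

/-- A conjunction of literals over the letters r₁,…,r_m. -/
inductive IsConjLits (m : ℕ) : Formula → Prop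
  | lit {φ} : IsLit m φ → IsConjLits m φ
  | conj {φ ψ} : IsConjLits m φ → IsConjLits m ψ → IsConjLits m (Formula.and φ ψ)

/-- The Craig Interpolation Property for 𝕂_n. -/
def HasCIP (n : ℕ) : Prop :=
  ∀ φ ψ : Formula, KProof n (φ.imp ψ) →
    ∃ γ : Formula, γ.letters ⊆ φ.letters ∩ ψ.letters ∧
      KProof n (φ.imp γ) ∧ KProof n (γ.imp ψ)



section Aux
variable {n : ℕ}

lemma realize_congr {M : NModel n} : ∀ {k} (φ : FO n k) (a b : Fin k → M.World),
    (∀ i, a i = b i) → (FO.Realize M φ a ↔ FO.Realize M φ b) := by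
  intro k φ a b h
  have : a = b := funext h
  subst this; rfl

lemma realize_rename {M : NModel n} : ∀ {k k'} (f : Fin k → Fin k') (φ : FO n k)
    (a : Fin k' → M.World), FO.Realize M (φ.rename f) a ↔ FO.Realize M φ (a ∘ f) := by
  intro k k' f φ
  induction φ generalizing k' with
  | pred p x => intro a; rfl
  | rel ts => intro a; rfl
  | eq x y => intro a; rfl
  | fal => intro a; rfl
  | not φ ih => intro a; exact not_congr (ih _ _)
  | and φ ψ ih₁ ih₂ => intro a; exact and_congr (ih₁ _ _) (ih₂ _ _)
  | or φ ψ ih₁ ih₂ => intro a; exact or_congr (ih₁ _ _) (ih₂ _ _)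
  | imp φ ψ ih₁ ih₂ => intro a; exact imp_congr (ih₁ _ _) (ih₂ _ _)
  | all φ ih =>
      intro a
      show (∀ x, FO.Realize M _ (Fin.snoc a x)) ↔ (∀ x, FO.Realize M _ (Fin.snoc (a ∘ f) x))
      refine forall_congr' fun x => ?_
      rw [ih]
      refine realize_congr _ _ _ fun j => ?_
      refine Fin.lastCases ?_ (fun i => ?_) j
      · simp [Fin.snoc_last]
      · simp [Fin.snoc_castSucc]

lemma realize_alls {M : NModel n} : ∀ {k} (m : ℕ) (φ : FO n (k + m)) (a : Fin k → M.World),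
    FO.Realize M (FO.alls m φ) a ↔ ∀ b : Fin m → M.World, FO.Realize M φ (Fin.append a b) := by
  intro k m
  induction m with
  | zero =>
      intro φ a
      constructor
      · intro h b
        exact (realize_congr _ _ _ (by simp [Fin.append, Fin.addCases]; intro i; congr 1 <;> simp)).mp h
      · intro h
        have := h (fun i => i.elim0)
        exact (realize_congr _ _ _ (by intro i; simp [Fin.append, Fin.addCases]; congr 1 <;> simp)).mp this
  | succ m ih =>
      intro φ a
      show FO.Realize M (FO.alls m φ.all) a ↔ _
      rw [ih]
      constructor
      · intro h b
        have := h (Fin.init b) (b (Fin.last m))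
        rw [← Fin.append_snoc] at this
        have e : Fin.append a (Fin.snoc (Fin.init b) (b (Fin.last m))) = Fin.append a b :=
          congrArg _ (Fin.snoc_init_self b)
        rwa [e] at this
      · intro h b x
        have := h (Fin.snoc b x)
        rwa [Fin.append_snoc] at this

lemma realize_disjList {M : NModel n} {k} (a : Fin k → M.World) :
    ∀ (L : List (FO n k)), FO.Realize M (FO.disjList L) a ↔ ∃ ψ ∈ L, FO.Realize M ψ a := by
  intro L
  induction L with
  | nil => simp [FO.disjList, FO.Realize]
  | cons φ rest ih =>
      cases rest with
      | nil => simp [FO.disjList]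
      | cons ψ rest' =>
          show FO.Realize M (FO.or φ _) a ↔ _
          rw [show FO.Realize M (FO.or φ (FO.disjList (ψ :: rest'))) a ↔ _ ∨ _ from Iff.rfl, ih]
          simp

lemma st_correct (φ : Formula) : ∀ (M : NModel n) (a : Fin 1 → M.World),
    FO.Realize M (ST n φ) a ↔ Sat M (a 0) φ := by
  induction φ with
  | atom p => intro M a; rfl
  | neg φ ih => intro M a; exact not_congr (ih M a)
  | and φ ψ ih₁ ih₂ => intro M a; exact and_congr (ih₁ M a) (ih₂ M a)
  | box φ ih =>
      intro M a
      show FO.Realize M (FO.alls n _) a ↔ _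
      rw [realize_alls]
      refine forall_congr' fun b => ?_
      show (FO.Realize M (FO.rel (Fin.cases (Fin.castAdd n (0 : Fin 1)) (fun i => Fin.natAdd 1 i)))
              (Fin.append a b) →
            FO.Realize M (FO.disjList ((List.finRange n).map
              (fun i => (ST n φ).rename (fun _ => Fin.natAdd 1 i)))) (Fin.append a b)) ↔ _
      refine imp_congr ?_ ?_
      · show (M.R (Fin.append a b (Fin.cases (Fin.castAdd n (0 : Fin 1)) (fun i => Fin.natAdd 1 i) 0))
            (fun i => Fin.append a b
              (Fin.cases (Fin.castAdd n (0 : Fin 1)) (fun i => Fin.natAdd 1 i) i.succ))) ↔ _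
        simp only [Fin.cases_zero, Fin.cases_succ, Fin.append_left, Fin.append_right]
      · rw [realize_disjList]
        constructor
        · rintro ⟨ψ, hmem, hψ⟩
          simp only [List.mem_map, List.mem_finRange] at hmem
          obtain ⟨i, -, rfl⟩ := hmem
          rw [realize_rename] at hψ
          have := (ih M _).mp hψ
          exact ⟨i, by simpa [Fin.append_right] using this⟩
        · rintro ⟨i, hi⟩
          refine ⟨(ST n φ).rename (fun _ => Fin.natAdd 1 i), ?_, ?_⟩
          · simp only [List.mem_map, List.mem_finRange]
            exact ⟨i, trivial, rfl⟩
          · rw [realize_rename]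
            refine (ih M _).mpr ?_
            simpa [Fin.append_right] using hi

lemma sat_bisim {M N : NModel n} {Z : M.World → N.World → Prop} (hZ : IsBisim M N Z) :
    ∀ (φ : Formula) (w : M.World) (v : N.World), Z w v → (Sat M w φ ↔ Sat N v φ) := by
  obtain ⟨-, hV, hforth, hback⟩ := hZ
  intro φ
  induction φ with
  | atom p => intro w v h; exact hV w v h p
  | neg φ ih => intro w v h; exact not_congr (ih w v h)
  | and φ ψ ih₁ ih₂ => intro w v h; exact and_congr (ih₁ w v h) (ih₂ w v h)
  | box φ ih =>
      intro w v h
      constructor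
      · intro hs t' hr'
        obtain ⟨t, hrt, hm⟩ := hback w v t' h hr'
        obtain ⟨i, hi⟩ := hs t hrt
        obtain ⟨j, hj⟩ := hm i
        exact ⟨j, (ih _ _ hj).mp hi⟩
      · intro hs t hr
        obtain ⟨t', hrt', hm⟩ := hforth w v t h hr
        obtain ⟨j, hj⟩ := hs t' hrt'
        obtain ⟨i, hi⟩ := hm j
        exact ⟨i, (ih _ _ hi).mpr hj⟩

end Aux


section TypeMachinery
variable {n : ℕ}

lemma sat_conjList {M : NModel n} {w : M.World} :
    ∀ L : List Formula, Sat M w (conjList L) ↔ ∀ ψ ∈ L, Sat M w ψ := by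
  intro L
  induction L with
  | nil => simp [conjList, Formula.bot, Sat]
  | cons φ rest ih =>
      cases rest with
      | nil => simp [conjList]
      | cons ψ rest' =>
          show Sat M w (Formula.and φ (conjList (ψ :: rest'))) ↔ _
          rw [show Sat M w (Formula.and φ (conjList (ψ :: rest'))) ↔
            Sat M w φ ∧ Sat M w (conjList (ψ :: rest')) from Iff.rfl, ih]
          simp

lemma sat_disjList {M : NModel n} {w : M.World} :
    ∀ L : List Formula, Sat M w (disjList L) ↔ ∃ ψ ∈ L, Sat M w ψ := by
  intro L
  induction L with
  | nil => simp [disjList, Formula.bot, Sat]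
  | cons φ rest ih =>
      cases rest with
      | nil => simp [disjList]
      | cons ψ rest' =>
          show Sat M w (Formula.or φ (disjList (ψ :: rest'))) ↔ _
          have : Sat M w (Formula.or φ (disjList (ψ :: rest'))) ↔
              Sat M w φ ∨ Sat M w (disjList (ψ :: rest')) := by
            show (¬ (¬ Sat M w φ ∧ ¬ Sat M w (disjList (ψ :: rest')))) ↔ _
            tauto
          rw [this, ih]
          simp

lemma sat_dia {M : NModel n} {w : M.World} {φ : Formula} :
    Sat M w (Formula.dia φ) ↔ ∃ v : Fin n → M.World, M.R w v ∧ ∀ i, Sat M (v i) φ := by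
  show (¬ ∀ v : Fin n → M.World, M.R w v → ∃ i, ¬ Sat M (v i) φ) ↔ _
  push_neg
  rfl

/-- The space of depth-l wa-bisimulation types over atoms < K. -/
def MType (K : ℕ) : ℕ → Type
  | 0 => Set (Fin K)
  | l+1 => Set (Fin K) × Set (Set (MType K l))

instance mtype_finite (K : ℕ) : ∀ l, Finite (MType K l)
  | 0 => by unfold MType; infer_instance
  | l+1 => by
      have := mtype_finite K l
      unfold MType; infer_instance

/-- The depth-l type of a world. -/
def typeOf (K : ℕ) (M : NModel n) : ∀ l, M.World → MType K l
  | 0, w => ({p : Fin K | M.V w ↑p} : Set (Fin K))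
  | l+1, w => (({p : Fin K | M.V w ↑p} : Set (Fin K)),
      {A : Set (MType K l) | ∃ v : Fin n → M.World, M.R w v ∧ ∀ i, typeOf K M l (v i) ∈ A})

lemma exists_enum (X : Type) [Finite X] : ∃ L : List X, ∀ x : X, x ∈ L := by
  have := Fintype.ofFinite X
  exact ⟨Fintype.elems.toList, fun x => by simp [Fintype.complete]⟩

lemma exists_enum_set {X : Type} [Finite X] (A : Set X) :
    ∃ L : List X, ∀ x : X, x ∈ L ↔ x ∈ A :=
  ⟨A.toFinite.toFinset.toList, fun x => by simp⟩

/-- Characteristic formulas for depth-l types. -/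
lemma chi_exists (K : ℕ) : ∀ l : ℕ, ∃ χ : MType K l → Formula,
    ∀ (M : NModel n) (w : M.World) (c : MType K l),
      Sat M w (χ c) ↔ typeOf K M l w = c := by
  intro l
  induction l with
  | zero =>
      classical
      refine ⟨fun c => conjList ((List.finRange K).map
        (fun p => if p ∈ (show Set (Fin K) from c) then Formula.atom ↑p
          else Formula.neg (Formula.atom ↑p))), ?_⟩
      intro M w c
      rw [sat_conjList]
      constructor
      · intro h
        show ({p : Fin K | M.V w ↑p} : Set (Fin K)) = c
        ext p
        have := h _ (List.mem_map.mpr ⟨p, List.mem_finRange p, rfl⟩)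
        by_cases hp : p ∈ (show Set (Fin K) from c)
        · simp only [if_pos hp] at this
          simp only [Set.mem_setOf_eq]
          exact ⟨fun _ => hp, fun _ => this⟩
        · simp only [if_neg hp] at this
          simp only [Set.mem_setOf_eq]
          exact ⟨fun hv => absurd hv this, fun hc => absurd hc hp⟩
      · rintro rfl ψ hψ
        obtain ⟨p, -, rfl⟩ := List.mem_map.mp hψ
        by_cases hp : p ∈ (show Set (Fin K) from typeOf K M 0 w)
        · rw [if_pos hp]; exact hp
        · rw [if_neg hp]; exact hp
  | succ l ih =>
      classical
      obtain ⟨χ, hχ⟩ := ih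
      obtain ⟨LA, hLA⟩ := exists_enum (Set (MType K l))
      have hsel : ∀ A : Set (MType K l), ∃ LT : List (MType K l), ∀ t, t ∈ LT ↔ t ∈ A :=
        fun A => exists_enum_set A
      choose sel hsel using hsel
      refine ⟨fun c => Formula.and
        (conjList ((List.finRange K).map
          (fun p => if p ∈ c.1 then Formula.atom ↑p else Formula.neg (Formula.atom ↑p))))
        (conjList (LA.map (fun A =>
          if A ∈ c.2 then Formula.dia (disjList ((sel A).map χ))
          else Formula.neg (Formula.dia (disjList ((sel A).map χ)))))), ?_⟩
      intro M w c
      have hdia : ∀ A : Set (MType K l),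
          Sat M w (Formula.dia (disjList ((sel A).map χ))) ↔
          A ∈ (typeOf K M (l+1) w).2 := by
        intro A
        rw [sat_dia]
        show _ ↔ (∃ v : Fin n → M.World, M.R w v ∧ ∀ i, typeOf K M l (v i) ∈ A)
        refine exists_congr fun v => and_congr_right fun _ => forall_congr' fun i => ?_
        rw [sat_disjList]
        constructor
        · rintro ⟨ψ, hmem, hψ⟩
          obtain ⟨t, ht, rfl⟩ := List.mem_map.mp hmem
          rw [hχ] at hψ
          rw [hψ]
          exact (hsel A t).mp ht
        · intro h
          exact ⟨χ (typeOf K M l (v i)), List.mem_map.mpr ⟨_, (hsel A _).mpr h, rfl⟩,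
            (hχ M (v i) _).mpr rfl⟩
      show (Sat M w _ ∧ Sat M w _) ↔ _
      rw [sat_conjList, sat_conjList]
      constructor
      · rintro ⟨h1, h2⟩
        have hV : ({p : Fin K | M.V w ↑p} : Set (Fin K)) = c.1 := by
          ext p
          have := h1 _ (List.mem_map.mpr ⟨p, List.mem_finRange p, rfl⟩)
          by_cases hp : p ∈ c.1
          · simp only [if_pos hp] at this
            exact ⟨fun _ => hp, fun _ => this⟩
          · simp only [if_neg hp] at this
            exact ⟨fun hv => absurd hv this, fun hc => absurd hc hp⟩
        have hS : (typeOf K M (l+1) w).2 = c.2 := by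
          ext A
          have := h2 _ (List.mem_map.mpr ⟨A, hLA A, rfl⟩)
          by_cases hA : A ∈ c.2
          · simp only [if_pos hA] at this
            exact ⟨fun _ => hA, fun _ => (hdia A).mp this⟩
          · simp only [if_neg hA] at this
            exact ⟨fun hv => absurd ((hdia A).mpr hv) this, fun hc => absurd hc hA⟩
        have : typeOf K M (l+1) w = (({p : Fin K | M.V w ↑p} : Set (Fin K)),
            (typeOf K M (l+1) w).2) := rfl
        rw [this, hV, hS]
        exact Prod.mk.eta
      · rintro rfl
        constructor
        · intro ψ hψ
          obtain ⟨p, -, rfl⟩ := List.mem_map.mp hψ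
          by_cases hp : p ∈ (typeOf K M (l+1) w).1
          · simp only [if_pos hp]; exact hp
          · simp only [if_neg hp]; exact hp
        · intro ψ hψ
          obtain ⟨A, -, rfl⟩ := List.mem_map.mp hψ
          by_cases hA : A ∈ (typeOf K M (l+1) w).2
          · simpa [if_pos hA] using (hdia A).mpr hA
          · simp only [if_neg hA]; exact fun h => hA ((hdia A).mp h)

end TypeMachinery


section Models
variable {n : ℕ}

/-- Erase all atoms ≥ K. -/
@[reducible] def capV (M : NModel n) (K : ℕ) : NModel n where
  World := M.World
  nonempty := M.nonempty
  R := M.R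
  V := fun w p => p < K ∧ M.V w p

/-- All predicate symbols of a first-order formula are < K. -/
def FO.PredsLT (K : ℕ) : ∀ {k}, FO n k → Prop
  | _, .pred p _ => p < K
  | _, .rel _ => True
  | _, .eq _ _ => True
  | _, .fal => True
  | _, .not φ => φ.PredsLT K
  | _, .and φ ψ => φ.PredsLT K ∧ ψ.PredsLT K
  | _, .or φ ψ => φ.PredsLT K ∧ ψ.PredsLT K
  | _, .imp φ ψ => φ.PredsLT K ∧ ψ.PredsLT K
  | _, .all φ => φ.PredsLT K

lemma predsLT_mono : ∀ {k} (φ : FO n k) {K K'}, K ≤ K' → φ.PredsLT K → φ.PredsLT K' := by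
  intro k φ
  induction φ with
  | pred p x => intro K K' h hp; exact lt_of_lt_of_le hp h
  | rel _ => intro K K' h hp; trivial
  | eq _ _ => intro K K' h hp; trivial
  | fal => intro K K' h hp; trivial
  | not φ ih => intro K K' h hp; exact ih h hp
  | and φ ψ ih₁ ih₂ => intro K K' h hp; exact ⟨ih₁ h hp.1, ih₂ h hp.2⟩
  | or φ ψ ih₁ ih₂ => intro K K' h hp; exact ⟨ih₁ h hp.1, ih₂ h hp.2⟩
  | imp φ ψ ih₁ ih₂ => intro K K' h hp; exact ⟨ih₁ h hp.1, ih₂ h hp.2⟩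
  | all φ ih => intro K K' h hp; exact ih h hp

lemma exists_predsLT {k} (φ : FO n k) : ∃ K, φ.PredsLT K := by
  induction φ with
  | pred p x => exact ⟨p + 1, Nat.lt_succ_self p⟩
  | rel _ => exact ⟨0, trivial⟩
  | eq _ _ => exact ⟨0, trivial⟩
  | fal => exact ⟨0, trivial⟩
  | not φ ih => exact ih
  | and φ ψ ih₁ ih₂ =>
      obtain ⟨K₁, h₁⟩ := ih₁; obtain ⟨K₂, h₂⟩ := ih₂
      exact ⟨max K₁ K₂, predsLT_mono _ (le_max_left _ _) h₁,
        predsLT_mono _ (le_max_right _ _) h₂⟩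
  | or φ ψ ih₁ ih₂ =>
      obtain ⟨K₁, h₁⟩ := ih₁; obtain ⟨K₂, h₂⟩ := ih₂
      exact ⟨max K₁ K₂, predsLT_mono _ (le_max_left _ _) h₁,
        predsLT_mono _ (le_max_right _ _) h₂⟩
  | imp φ ψ ih₁ ih₂ =>
      obtain ⟨K₁, h₁⟩ := ih₁; obtain ⟨K₂, h₂⟩ := ih₂
      exact ⟨max K₁ K₂, predsLT_mono _ (le_max_left _ _) h₁,
        predsLT_mono _ (le_max_right _ _) h₂⟩
  | all φ ih => exact ih

/-- A formula with predicates < K cannot see atoms ≥ K. -/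
lemma realize_capV {M : NModel n} {K : ℕ} :
    ∀ {k} (φ : FO n k), φ.PredsLT K → ∀ (a : Fin k → M.World),
      FO.Realize M φ a ↔ FO.Realize (capV M K) φ (a : Fin k → (capV M K).World) := by
  intro k φ
  induction φ with
  | pred p x => intro h a; exact ⟨fun hv => ⟨h, hv⟩, fun hv => hv.2⟩
  | rel _ => intro h a; exact Iff.rfl
  | eq _ _ => intro h a; exact Iff.rfl
  | fal => intro h a; exact Iff.rfl
  | not φ ih => intro h a; exact not_congr (ih h a)
  | and φ ψ ih₁ ih₂ => intro h a; exact and_congr (ih₁ h.1 a) (ih₂ h.2 a)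
  | or φ ψ ih₁ ih₂ => intro h a; exact or_congr (ih₁ h.1 a) (ih₂ h.2 a)
  | imp φ ψ ih₁ ih₂ => intro h a; exact imp_congr (ih₁ h.1 a) (ih₂ h.2 a)
  | all φ ih => intro h a; exact forall_congr' fun x => ih h _

lemma typeOf_capV (M : NModel n) (K : ℕ) :
    ∀ (l : ℕ) (w : M.World), typeOf K (capV M K) l w = typeOf K M l w := by
  intro l
  induction l with
  | zero =>
      intro w
      show ({p : Fin K | (↑p < K ∧ M.V w ↑p)} : Set (Fin K)) = {p : Fin K | M.V w ↑p}
      ext p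
      simp [p.isLt]
  | succ l ih =>
      intro w
      show (_, _) = (_, _)
      refine Prod.ext ?_ ?_
      · show ({p : Fin K | (↑p < K ∧ M.V w ↑p)} : Set (Fin K)) = {p : Fin K | M.V w ↑p}
        ext p
        simp [p.isLt]
      · show {A : Set (MType K l) | ∃ v : Fin n → M.World, M.R w v ∧
            ∀ i, typeOf K (capV M K) l (v i) ∈ A} = _
        ext A
        simp only [Set.mem_setOf_eq]
        refine exists_congr fun v => and_congr_right fun _ => forall_congr' fun i => ?_
        rw [ih]

/-- Disjoint union of two models. -/
@[reducible] def DSum (A B : NModel n) : NModel n where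
  World := A.World ⊕ B.World
  nonempty := ⟨Sum.inl A.nonempty.some⟩
  R := fun z t => match z with
    | Sum.inl a => ∃ a', t = (fun i => Sum.inl (a' i)) ∧ A.R a a'
    | Sum.inr b => ∃ b', t = (fun i => Sum.inr (b' i)) ∧ B.R b b'
  V := fun z p => match z with
    | Sum.inl a => A.V a p
    | Sum.inr b => B.V b p

/-- Product with a finite index set (c+1 disjoint copies). -/
@[reducible] def PCopies (A : NModel n) (c : ℕ) : NModel n where
  World := A.World × Fin (c + 1)
  nonempty := ⟨(A.nonempty.some, 0)⟩
  R := fun z t => ∃ a', t = (fun i => (a' i, z.2)) ∧ A.R z.1 a'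
  V := fun z p => A.V z.1 p

/-- The truncated tree model. -/
@[reducible] def TBmod (M : NModel n) [NeZero n] (w : M.World) (K l : ℕ) : NModel n :=
  UnravelB (capV M K) w l

/-- The grafted tree model: truncated tree with a copy of the model attached at the leaves. -/
@[reducible] def Graft (M : NModel n) [NeZero n] (w : M.World) (K l : ℕ) : NModel n where
  World := (TBmod M w K l).World ⊕ M.World
  nonempty := ⟨Sum.inr M.nonempty.some⟩
  R := fun z t => match z with
    | Sum.inl s => (∃ s', t = (fun i => Sum.inl (s' i)) ∧ (TBmod M w K l).R s s') ∨
        (s.val.length = l + 1 ∧ ∃ u, t = (fun i => Sum.inr (u i)) ∧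
          M.R (rmap (capV M K) w s.val) u)
    | Sum.inr x => ∃ u, t = (fun i => Sum.inr (u i)) ∧ M.R x u
  V := fun z p => match z with
    | Sum.inl s => (capV M K).V (rmap (capV M K) w s.val) p
    | Sum.inr x => (capV M K).V x p

lemma isBisim_comp {M₁ M₂ M₃ : NModel n} {Z : M₁.World → M₂.World → Prop}
    {Z' : M₂.World → M₃.World → Prop} (h : IsBisim M₁ M₂ Z) (h' : IsBisim M₂ M₃ Z') 
    {w₁ w₂ w₃} (hw : Z w₁ w₂) (hw' : Z' w₂ w₃) :
    IsBisim M₁ M₃ (fun a c => ∃ b, Z a b ∧ Z' b c) := by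
  obtain ⟨-, hV, hf, hb⟩ := h
  obtain ⟨-, hV', hf', hb'⟩ := h'
  refine ⟨⟨w₁, w₃, w₂, hw, hw'⟩, ?_, ?_, ?_⟩
  · rintro a c ⟨b, h1, h2⟩ p
    rw [hV a b h1 p, hV' b c h2 p]
  · rintro a c v ⟨b, h1, h2⟩ hR
    obtain ⟨v₂, hR₂, hm₂⟩ := hf a b v h1 hR
    obtain ⟨v₃, hR₃, hm₃⟩ := hf' b c v₂ h2 hR₂
    refine ⟨v₃, hR₃, fun j => ?_⟩
    obtain ⟨i₂, hi₂⟩ := hm₃ j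
    obtain ⟨i₁, hi₁⟩ := hm₂ i₂
    exact ⟨i₁, v₂ i₂, hi₁, hi₂⟩
  · rintro a c v₃ ⟨b, h1, h2⟩ hR
    obtain ⟨v₂, hR₂, hm₂⟩ := hb' b c v₃ h2 hR
    obtain ⟨v₁, hR₁, hm₁⟩ := hb a b v₂ h1 hR₂
    refine ⟨v₁, hR₁, fun i => ?_⟩
    obtain ⟨j₂, hj₂⟩ := hm₁ i
    obtain ⟨j₃, hj₃⟩ := hm₂ j₂
    exact ⟨j₃, v₂ j₂, hj₂, hj₃⟩

lemma isBisim_pcopies (A : NModel n) (c : ℕ) :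
    IsBisim A (PCopies A c) (fun a z => z.1 = a) := by
  refine ⟨⟨A.nonempty.some, (A.nonempty.some, 0), rfl⟩, ?_, ?_, ?_⟩
  · rintro a ⟨a', i⟩ rfl p; exact Iff.rfl
  · rintro a ⟨a', i⟩ v rfl hR
    exact ⟨fun j => (v j, i), ⟨v, rfl, hR⟩, fun j => ⟨j, rfl⟩⟩
  · rintro a ⟨a', i⟩ v' rfl hR
    obtain ⟨u, rfl, hR⟩ := hR
    exact ⟨u, hR, fun i => ⟨i, rfl⟩⟩

lemma isBisim_inl (A B : NModel n) :
    IsBisim A (DSum A B) (fun a z => z = Sum.inl a) := by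
  refine ⟨⟨A.nonempty.some, Sum.inl A.nonempty.some, rfl⟩, ?_, ?_, ?_⟩
  · rintro a z rfl p; exact Iff.rfl
  · rintro a z v rfl hR
    exact ⟨fun j => Sum.inl (v j), ⟨v, rfl, hR⟩, fun j => ⟨j, rfl⟩⟩
  · rintro a z v' rfl hR
    obtain ⟨u, rfl, hR⟩ := hR
    exact ⟨u, hR, fun i => ⟨i, rfl⟩⟩

lemma isBisim_inr (A B : NModel n) :
    IsBisim B (DSum A B) (fun b z => z = Sum.inr b) := by
  refine ⟨⟨B.nonempty.some, Sum.inr B.nonempty.some, rfl⟩, ?_, ?_, ?_⟩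
  · rintro b z rfl p; exact Iff.rfl
  · rintro b z v rfl hR
    exact ⟨fun j => Sum.inr (v j), ⟨v, rfl, hR⟩, fun j => ⟨j, rfl⟩⟩
  · rintro b z v' rfl hR
    obtain ⟨u, rfl, hR⟩ := hR
    exact ⟨u, hR, fun i => ⟨i, rfl⟩⟩

lemma unravelB_finite (M : NModel n) [NeZero n] (w : M.World) (l : ℕ)
    [Finite M.World] : Finite (UnravelB M w l).World := by
  have : Finite ((Fin n → M.World) × Fin n) := by infer_instance
  have h := List.finite_length_le ((Fin n → M.World) × Fin n) (l + 1)
  have : Finite {s : List ((Fin n → M.World) × Fin n) // s.length ≤ l + 1} :=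
    h.to_subtype
  refine Finite.of_injective
    (fun s => (⟨s.val, s.prop.2⟩ : {s : List ((Fin n → M.World) × Fin n) // s.length ≤ l + 1}))
    (fun s t hst => ?_)
  simp only [Subtype.mk.injEq] at hst
  exact Subtype.ext hst

end Models


section TreeBisim
variable {n : ℕ} [NeZero n]

lemma rmap_append (M : NModel n) (w : M.World) (s : List ((Fin n → M.World) × Fin n)) (a) :
    rmap M w (s ++ [a]) = a.1 a.2 := by
  unfold rmap
  rw [List.getLast?_concat]

lemma goodSeq_append {M : NModel n} {w : M.World} {s : List ((Fin n → M.World) × Fin n)}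
    (hs : GoodSeq M w s) (a : (Fin n → M.World) × Fin n) (hR : M.R (rmap M w s) a.1) :
    GoodSeq M w (s ++ [a]) := by
  constructor
  · obtain ⟨rest, rfl⟩ := hs.1
    exact ⟨rest ++ [a], by simp⟩
  · show List.IsChain _ (s ++ [a]); rw [List.isChain_append]
    refine ⟨hs.2, List.isChain_singleton _, ?_⟩
    intro x hx y hy
    simp only [List.head?, Option.mem_def, Option.some.injEq] at hy
    subst hy
    have hrm : rmap M w s = x.1 x.2 := by
      unfold rmap
      rw [show s.getLast? = some x from hx]
    rw [← hrm]
    exact hR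

/-- Children in the truncated tree. -/
lemma tb_child (M : NModel n) (w : M.World) (K l : ℕ)
    (s : (TBmod M w K l).World) (hlen : s.val.length ≤ l)
    (v : Fin n → M.World) (hR : M.R (rmap (capV M K) w s.val) v) :
    ∃ t : Fin n → (TBmod M w K l).World, (TBmod M w K l).R s t ∧
      ∀ i, (t i).val = s.val ++ [(v, i)] ∧ rmap (capV M K) w (t i).val = v i := by
  have hgood : ∀ i : Fin n, GoodSeq (capV M K) w (s.val ++ [(v, i)]) :=
    fun i => goodSeq_append s.prop.1 (v, i) hR
  refine ⟨fun i => ⟨s.val ++ [(v, i)], hgood i, by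
    simp only [List.length_append, List.length_singleton]
    omega⟩, ?_, ?_⟩
  · constructor
    · have : (fun i => rmap (capV M K) w (s.val ++ [(v, i)])) = v := by
        funext i
        exact rmap_append (capV M K) w s.val (v, i)
      show (capV M K).R _ _
      rw [show (fun i => rmap (capV M K) w (s.val ++ [(v, i)])) = v from this]
      exact hR
    · intro i
      exact ⟨(v, i), rfl⟩
  · intro i
    exact ⟨rfl, rmap_append (capV M K) w s.val (v, i)⟩

/-- Destructing the tree relation. -/
lemma tb_R_dest {M : NModel n} {w : M.World} {K l : ℕ}
    {s : (TBmod M w K l).World} {t : Fin n → (TBmod M w K l).World}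
    (h : (TBmod M w K l).R s t) :
    M.R (rmap (capV M K) w s.val) (fun i => rmap (capV M K) w (t i).val) ∧
      ∀ i, (t i).val.length = s.val.length + 1 ∧ s.val.length ≤ l := by
  obtain ⟨hR, hsub⟩ := h
  refine ⟨hR, fun i => ?_⟩
  obtain ⟨a, ha⟩ := hsub i
  have hlen : (t i).val.length = s.val.length + 1 := by
    rw [ha]; simp
  have : (t i).val.length ≤ l + 1 := (t i).prop.2
  exact ⟨hlen, by omega⟩

lemma tb_root_val (M : NModel n) (w : M.World) (K l : ℕ) :
    (unravelBRoot (capV M K) w l).val = [((fun _ => w), (0 : Fin n))] := rfl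

lemma rmap_root (M : NModel n) (w : M.World) (K : ℕ) :
    rmap (capV M K) w [((fun _ => w), (0 : Fin n))] = w := rfl

/-- The grafted tree is fully bisimilar to the (capped) model. -/
lemma isBisim_graft (M : NModel n) (w : M.World) (K l : ℕ) :
    IsBisim (capV M K) (Graft M w K l)
      (fun x g => (∃ s : (TBmod M w K l).World, g = Sum.inl s ∧
        rmap (capV M K) w s.val = x) ∨ g = Sum.inr x) := by
  refine ⟨⟨w, Sum.inl (unravelBRoot (capV M K) w l), Or.inl ⟨_, rfl, rfl⟩⟩, ?_, ?_, ?_⟩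
  · rintro x g (⟨s, rfl, rfl⟩ | rfl) p
    · exact Iff.rfl
    · exact Iff.rfl
  · rintro x g v hZ hR
    rcases hZ with ⟨s, rfl, hrm⟩ | rfl
    · by_cases hlen : s.val.length ≤ l
      · obtain ⟨t, hRt, ht⟩ := tb_child M w K l s hlen v (by rwa [hrm])
        refine ⟨fun i => Sum.inl (t i), Or.inl ⟨t, rfl, hRt⟩, fun j => ⟨j, Or.inl
          ⟨t j, rfl, (ht j).2⟩⟩⟩
      · have hl : s.val.length = l + 1 := by
          have := s.prop.2; omega
        refine ⟨fun i => Sum.inr (v i), Or.inr ⟨hl, v, rfl, by rwa [hrm]⟩,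
          fun j => ⟨j, Or.inr rfl⟩⟩
    · exact ⟨fun i => Sum.inr (v i), ⟨v, rfl, hR⟩, fun j => ⟨j, Or.inr rfl⟩⟩
  · rintro x g t hZ hRt
    rcases hZ with ⟨s, rfl, hrm⟩ | rfl
    · rcases hRt with ⟨s', rfl, hTR⟩ | ⟨hl, u, rfl, hMR⟩
      · refine ⟨fun i => rmap (capV M K) w (s' i).val, ?_, fun i => ⟨i, Or.inl ⟨s' i, rfl, rfl⟩⟩⟩
        have := (tb_R_dest hTR).1
        rw [hrm] at this
        exact this
      · exact ⟨u, by rwa [hrm] at hMR, fun i => ⟨i, Or.inr rfl⟩⟩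
    · obtain ⟨u, rfl, hMR⟩ := hRt
      exact ⟨u, hMR, fun i => ⟨i, Or.inr rfl⟩⟩

lemma typeOf_V_eq {M N : NModel n} {K : ℕ} {k : ℕ} {x : M.World} {y : N.World}
    (h : typeOf K M k x = typeOf K N k y) : ∀ p : Fin K, M.V x ↑p ↔ N.V y ↑p := by
  intro p
  cases k with
  | zero =>
      have := Set.ext_iff.mp (h : ({p : Fin K | M.V x ↑p} : Set (Fin K)) = _) p
      exact this
  | succ k =>
      have := congrArg Prod.fst h
      have := Set.ext_iff.mp (this : ({p : Fin K | M.V x ↑p} : Set (Fin K)) = _) p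
      exact this

/-- Truncated trees with equal root types are fully bisimilar. -/
lemma isBisim_typed {M N : NModel n} (w : M.World) (v : N.World) (K l : ℕ)
    (h : typeOf K M l w = typeOf K N l v) :
    IsBisim (TBmod M w K l) (TBmod N v K l)
      (fun s t => s.val.length = t.val.length ∧
        typeOf K M (l + 1 - s.val.length) (rmap (capV M K) w s.val) =
        typeOf K N (l + 1 - s.val.length) (rmap (capV N K) v t.val)) := by
  refine ⟨⟨unravelBRoot (capV M K) w l, unravelBRoot (capV N K) v l, rfl, by
    show typeOf K M (l + 1 - 1) w = typeOf K N (l + 1 - 1) v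
    simpa using h⟩, ?_, ?_, ?_⟩
  · rintro s t ⟨hlen, hty⟩ p
    show (p < K ∧ M.V _ p) ↔ (p < K ∧ N.V _ p)
    constructor
    · rintro ⟨hp, hv⟩
      exact ⟨hp, (typeOf_V_eq hty ⟨p, hp⟩).mp hv⟩
    · rintro ⟨hp, hv⟩
      exact ⟨hp, (typeOf_V_eq hty ⟨p, hp⟩).mpr hv⟩
  · rintro s t s' ⟨hlen, hty⟩ hR
    obtain ⟨hMR, hfacts⟩ := tb_R_dest hR
    have hslen : s.val.length ≤ l := (hfacts ⟨0, Nat.pos_of_ne_zero (NeZero.ne n)⟩).2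
    have hk : l + 1 - s.val.length = (l - s.val.length) + 1 := by omega
    rw [hk] at hty
    have hA : {c : MType K (l - s.val.length) | ∃ i, typeOf K M (l - s.val.length)
        (rmap (capV M K) w (s' i).val) = c} ∈
        (typeOf K M ((l - s.val.length) + 1) (rmap (capV M K) w s.val)).2 :=
      ⟨fun i => rmap (capV M K) w (s' i).val, hMR, fun i => ⟨i, rfl⟩⟩
    rw [hty] at hA
    obtain ⟨u, hRu, hu⟩ := hA
    obtain ⟨t', hRt', ht'⟩ := tb_child N v K l t (by omega) u hRu
    refine ⟨t', hRt', fun j => ?_⟩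
    obtain ⟨i, hi⟩ := hu j
    have h1 : (s' i).val.length = s.val.length + 1 := (hfacts i).1
    have h2 : (t' j).val.length = t.val.length + 1 := by
      rw [(ht' j).1]; simp
    refine ⟨i, by omega, ?_⟩
    rw [h1]
    have hk2 : l + 1 - (s.val.length + 1) = l - s.val.length := by omega
    rw [hk2, (ht' j).2, hi]
  · rintro s t t' ⟨hlen, hty⟩ hR
    obtain ⟨hNR, hfacts⟩ := tb_R_dest hR
    have htlen : t.val.length ≤ l := (hfacts ⟨0, Nat.pos_of_ne_zero (NeZero.ne n)⟩).2
    have hk : l + 1 - s.val.length = (l - s.val.length) + 1 := by omega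
    rw [hk] at hty
    have hA : {c : MType K (l - s.val.length) | ∃ j, typeOf K N (l - s.val.length)
        (rmap (capV N K) v (t' j).val) = c} ∈
        (typeOf K N ((l - s.val.length) + 1) (rmap (capV N K) v t.val)).2 :=
      ⟨fun j => rmap (capV N K) v (t' j).val, hNR, fun j => ⟨j, rfl⟩⟩
    rw [← hty] at hA
    obtain ⟨u, hRu, hu⟩ := hA
    obtain ⟨s', hRs', hs'⟩ := tb_child M w K l s (by omega) u hRu
    refine ⟨s', hRs', fun i => ?_⟩
    obtain ⟨j, hj⟩ := hu i
    have h1 : (t' j).val.length = t.val.length + 1 := (hfacts j).1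
    have h2 : (s' i).val.length = s.val.length + 1 := by
      rw [(hs' i).1]; simp
    refine ⟨j, by omega, ?_⟩
    rw [h2]
    have hk2 : l + 1 - (s.val.length + 1) = l - s.val.length := by omega
    rw [hk2, (hs' i).2, hj]

end TreeBisim



section PathHelpers
variable {n : ℕ} {A : NModel n}

lemma edge_symm {x y : A.World} (h : Edge A x y) : Edge A y x := h.symm

lemma hasPath_refl (x : A.World) : HasPath A x x 0 :=
  ⟨fun _ => x, rfl, rfl, fun i hi => absurd hi (Nat.not_lt_zero i)⟩

lemma hasPath_symm {x y : A.World} {m : ℕ} (h : HasPath A x y m) : HasPath A y x m := by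
  obtain ⟨f, h0, hm, he⟩ := h
  refine ⟨fun i => f (m - i), by simp [hm], by simp [h0], fun i hi => ?_⟩
  have : m - (i + 1) + 1 = m - i := by omega
  have he' := he (m - (i+1)) (by omega)
  rw [this] at he'
  exact he'.symm

lemma hasPath_trans {x y z : A.World} {a b : ℕ} (h1 : HasPath A x y a)
    (h2 : HasPath A y z b) : HasPath A x z (a + b) := by
  obtain ⟨f, hf0, hfa, hfe⟩ := h1
  obtain ⟨g, hg0, hgb, hge⟩ := h2
  refine ⟨fun i => if i ≤ a then f i else g (i - a), by simp [hf0], ?_, ?_⟩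
  · show (if a + b ≤ a then f (a + b) else g (a + b - a)) = z
    by_cases hb : b = 0
    · subst hb
      rw [if_pos (by omega), Nat.add_zero, hfa, ← hg0]
      exact hgb
    · rw [if_neg (by omega), show a + b - a = b from by omega]
      exact hgb
  · intro i hi
    show Edge A (if i ≤ a then f i else g (i - a)) (if i + 1 ≤ a then f (i + 1) else g (i + 1 - a))
    by_cases h1' : i + 1 ≤ a
    · rw [if_pos (by omega), if_pos h1']
      exact hfe i (by omega)
    · by_cases h2' : i ≤ a
      · have hia : i = a := by omega
        subst hia
        rw [if_pos le_rfl, if_neg h1', show i + 1 - i = 1 from by omega, hfa, ← hg0]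
        exact hge 0 (by omega)
      · rw [if_neg h2', if_neg h1', show i + 1 - a = (i - a) + 1 from by omega]
        exact hge (i - a) (by omega)

lemma hasPath_cons {x y z : A.World} {m : ℕ} (h : Edge A x y) (hp : HasPath A y z m) :
    HasPath A x z (m + 1) := by
  have h1 : HasPath A x y 1 :=
    ⟨fun i => if i = 0 then x else y, by simp, by simp, fun i hi => by
      have : i = 0 := by omega
      subst this
      simpa using h⟩
  have := hasPath_trans h1 hp
  rwa [Nat.add_comm] at this

lemma hasPath_dest {x z : A.World} {m : ℕ} (h : HasPath A x z (m + 1)) :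
    ∃ y, Edge A x y ∧ HasPath A y z m := by
  obtain ⟨f, h0, hm, he⟩ := h
  refine ⟨f 1, by rw [← h0]; exact he 0 (by omega), ⟨fun i => f (i + 1), rfl, hm, ?_⟩⟩
  intro i hi
  exact he (i + 1) (by omega)

/-- "Within distance 2^r". -/
def Near (A : NModel n) (r : ℕ) (x y : A.World) : Prop :=
  ∃ m, m ≤ 2^r ∧ HasPath A x y m

lemma near_refl (r : ℕ) (x : A.World) : Near A r x x := ⟨0, by positivity, hasPath_refl x⟩

lemma near_symm {r : ℕ} {x y : A.World} (h : Near A r x y) : Near A r y x := by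
  obtain ⟨m, hm, hp⟩ := h
  exact ⟨m, hm, hasPath_symm hp⟩

lemma near_mono {r r' : ℕ} (hr : r ≤ r') {x y : A.World} (h : Near A r x y) :
    Near A r' x y := by
  obtain ⟨m, hm, hp⟩ := h
  exact ⟨m, le_trans hm (Nat.pow_le_pow_right (by omega) hr), hp⟩

lemma near_trans {r : ℕ} {x y z : A.World} (h1 : Near A r x y) (h2 : Near A r y z) :
    Near A (r + 1) x z := by
  obtain ⟨m1, hm1, hp1⟩ := h1
  obtain ⟨m2, hm2, hp2⟩ := h2
  exact ⟨m1 + m2, by rw [pow_succ]; omega, hasPath_trans hp1 hp2⟩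

lemma rc_of_R {x : A.World} {t : Fin n → A.World} (h : A.R x t) (i : Fin n) :
    Edge A x (t i) := Or.inl ⟨t, h, i, rfl⟩

lemma exists_fresh {m : ℕ} (L : List (Fin m)) (h : L.length < m) : ∃ j : Fin m, j ∉ L := by
  by_contra hc
  push_neg at hc
  have h1 : (Finset.univ : Finset (Fin m)) ⊆ L.toFinset := fun j _ => List.mem_toFinset.mpr (hc j)
  have h2 := Finset.card_le_card h1
  simp only [Finset.card_univ, Fintype.card_fin] at h2
  have h3 := L.toFinset_card_le
  omega

end PathHelpers




section UDef
variable {n : ℕ}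

/-- The big comparison structure for the locality argument. -/
@[reducible] def UModel (M : NModel n) [NeZero n] (w : M.World) (K l q : ℕ) : NModel n :=
  PCopies (DSum (Graft M w K l) (TBmod M w K l)) (q + 1)

end UDef

section EF
variable {n : ℕ} [NeZero n] (M : NModel n) (w : M.World) (K q : ℕ)

@[reducible] def EFU : NModel n := UModel M w K (2^q) q

@[reducible] def EFaT (s : (TBmod M w K (2^q)).World) (c : Fin (q+2)) : (EFU M w K q).World :=
  (Sum.inl (Sum.inl s), c)

@[reducible] def EFaM (x : M.World) (c : Fin (q+2)) : (EFU M w K q).World :=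
  (Sum.inl (Sum.inr x), c)

@[reducible] def EFbT (s : (TBmod M w K (2^q)).World) (c : Fin (q+2)) : (EFU M w K q).World :=
  (Sum.inr s, c)

lemma efu_R_iff (u : (EFU M w K q).World) (t : Fin n → (EFU M w K q).World) :
    (EFU M w K q).R u t ↔ ∃ z, t = (fun k => (z k, u.2)) ∧
      (DSum (Graft M w K (2^q)) (TBmod M w K (2^q))).R u.1 z := Iff.rfl

lemma edge_copy {u u' : (EFU M w K q).World} (h : Edge (EFU M w K q) u u') : u.2 = u'.2 := by
  rcases h with ⟨t, hR, i, rfl⟩ | ⟨t, hR, i, hu⟩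
  · obtain ⟨z, rfl, -⟩ := hR
    rfl
  · obtain ⟨z, rfl, -⟩ := hR
    rw [hu]

/-- Tree-to-tree edges (on either side, in any copy) from a tree tuple. -/
lemma edge_of_treeR {s : (TBmod M w K (2^q)).World} {t : Fin n → (TBmod M w K (2^q)).World}
    (hT : (TBmod M w K (2^q)).R s t) (i : Fin n) (c : Fin (q+2)) :
    Edge (EFU M w K q) (EFaT M w K q s c) (EFaT M w K q (t i) c) ∧
    Edge (EFU M w K q) (EFbT M w K q s c) (EFbT M w K q (t i) c) := by
  constructor
  · exact Or.inl ⟨fun k => EFaT M w K q (t k) c,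
      ⟨fun k => Sum.inl (Sum.inl (t k)), rfl, fun k => Sum.inl (t k), rfl,
        Or.inl ⟨t, rfl, hT⟩⟩, i, rfl⟩
  · exact Or.inl ⟨fun k => EFbT M w K q (t k) c,
      ⟨fun k => Sum.inr (t k), rfl, t, rfl, hT⟩, i, rfl⟩

lemma edge_aT_cases {s : (TBmod M w K (2^q)).World} {c : Fin (q+2)} {u : (EFU M w K q).World}
    (h : Edge (EFU M w K q) (EFaT M w K q s c) u) :
    (∃ s', u = EFaT M w K q s' c ∧
      (s'.val.length = s.val.length + 1 ∨ s.val.length = s'.val.length + 1) ∧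
      (∀ c', Edge (EFU M w K q) (EFaT M w K q s c') (EFaT M w K q s' c')) ∧
      (∀ c', Edge (EFU M w K q) (EFbT M w K q s c') (EFbT M w K q s' c'))) ∨
    (s.val.length = 2^q + 1 ∧ ∃ x, u = EFaM M w K q x c) := by
  rcases h with ⟨t, hR, i, rfl⟩ | ⟨t, hR, i, hti⟩
  · obtain ⟨z, rfl, hD⟩ := hR
    obtain ⟨g, hz, hG⟩ := hD
    rcases hG with ⟨s', hgs, hT⟩ | ⟨hlen, uu, hgu, hM⟩
    · subst hgs
      refine Or.inl ⟨s' i, ?_, Or.inl ((tb_R_dest hT).2 i).1, fun c' => (edge_of_treeR M w K q hT i c').1,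
        fun c' => (edge_of_treeR M w K q hT i c').2⟩
      exact congrArg (fun y => (y, c)) (congrFun hz i)
    · subst hgu
      refine Or.inr ⟨hlen, uu i, ?_⟩
      exact congrArg (fun y => (y, c)) (congrFun hz i)
  · obtain ⟨z, rfl, hD⟩ := hR
    have hc : c = u.2 := congrArg Prod.snd hti
    subst hc
    have hz : z i = Sum.inl (Sum.inl s) := congrArg Prod.fst hti.symm
    rcases hu1 : u.1 with g | t''
    · rw [hu1] at hD
      obtain ⟨g', hz', hG⟩ := hD
      rcases hg : g with s'' | x
      · rw [hg] at hG
        rcases hG with ⟨s', hgs, hT⟩ | ⟨hlen, uu, hgu, hM⟩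
        · subst hgs
          have hsi : s' i = s := by
            have h1 := congrFun hz' i
            rw [hz] at h1
            exact Sum.inl.inj (Sum.inl.inj h1.symm)
          refine Or.inl ⟨s'', ?_, ?_, fun c' => edge_symm (by
              have := (edge_of_treeR M w K q hT i c').1
              rwa [hsi] at this),
            fun c' => edge_symm (by
              have := (edge_of_treeR M w K q hT i c').2
              rwa [hsi] at this)⟩
          · show u = (Sum.inl (Sum.inl s''), u.2)
            have h2 : u = (u.1, u.2) := rfl
            rw [h2, hu1, hg]
          · right
            rw [← hsi]
            exact ((tb_R_dest hT).2 i).1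
        · subst hgu
          have h1 := congrFun hz' i
          rw [hz] at h1
          exact absurd h1.symm (by simp)
      · rw [hg] at hG
        obtain ⟨uu, hgu, hM⟩ := hG
        subst hgu
        have h1 := congrFun hz' i
        rw [hz] at h1
        exact absurd h1.symm (by simp)
    · rw [hu1] at hD
      obtain ⟨t', hz', hT⟩ := hD
      have := congrFun hz' i
      rw [hz] at this
      exact absurd this.symm (by simp)

lemma edge_bT_cases {s : (TBmod M w K (2^q)).World} {c : Fin (q+2)} {u : (EFU M w K q).World}
    (h : Edge (EFU M w K q) (EFbT M w K q s c) u) :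
    ∃ s', u = EFbT M w K q s' c ∧
      (s'.val.length = s.val.length + 1 ∨ s.val.length = s'.val.length + 1) ∧
      (∀ c', Edge (EFU M w K q) (EFaT M w K q s c') (EFaT M w K q s' c')) ∧
      (∀ c', Edge (EFU M w K q) (EFbT M w K q s c') (EFbT M w K q s' c')) := by
  rcases h with ⟨t, hR, i, rfl⟩ | ⟨t, hR, i, hti⟩
  · obtain ⟨z, rfl, hD⟩ := hR
    obtain ⟨t', hz, hT⟩ := hD
    subst hz
    refine ⟨t' i, rfl, Or.inl ((tb_R_dest hT).2 i).1,
      fun c' => (edge_of_treeR M w K q hT i c').1, fun c' => (edge_of_treeR M w K q hT i c').2⟩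
  · obtain ⟨z, rfl, hD⟩ := hR
    have hc : c = u.2 := congrArg Prod.snd hti
    subst hc
    have hz : z i = Sum.inr s := congrArg Prod.fst hti.symm
    rcases hu1 : u.1 with g | t''
    · rw [hu1] at hD
      obtain ⟨g', hz', hG⟩ := hD
      have := congrFun hz' i
      rw [hz] at this
      exact absurd this.symm (by simp)
    · rw [hu1] at hD
      obtain ⟨t', hz', hT⟩ := hD
      have hsi : t' i = s := by
        have := congrFun hz' i
        rw [hz] at this
        exact Sum.inr.inj this.symm
      refine ⟨t'', ?_, ?_, fun c' => edge_symm (by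
          have := (edge_of_treeR M w K q hT i c').1
          rwa [hsi] at this),
        fun c' => edge_symm (by
          have := (edge_of_treeR M w K q hT i c').2
          rwa [hsi] at this)⟩
      · show u = (Sum.inr t'', u.2)
        have : u = (u.1, u.2) := rfl
        rw [this, hu1]
      · right
        rw [← hsi]
        exact ((tb_R_dest hT).2 i).1

/-- Short paths from shallow tree nodes on the grafted side stay in the tree and
transfer to the truncated side. -/
lemma path_from_aT : ∀ (m : ℕ) (s : (TBmod M w K (2^q)).World) (c : Fin (q+2))
    (u : (EFU M w K q).World), HasPath (EFU M w K q) (EFaT M w K q s c) u m →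
    s.val.length + m ≤ 2^q + 1 →
    ∃ s', u = EFaT M w K q s' c ∧ s'.val.length ≤ s.val.length + m ∧
      ∀ c', HasPath (EFU M w K q) (EFbT M w K q s c') (EFbT M w K q s' c') m := by
  intro m
  induction m with
  | zero =>
      intro s c u hp hlen
      obtain ⟨f, h0, hm, -⟩ := hp
      refine ⟨s, by rw [← hm, h0], by omega, fun c' => hasPath_refl _⟩
  | succ m ih =>
      intro s c u hp hlen
      obtain ⟨u₁, he, hp'⟩ := hasPath_dest hp
      rcases edge_aT_cases M w K q he with ⟨s₁, rfl, hlen₁, hea, heb⟩ | ⟨hleaf, -⟩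
      · have hlen₁' : s₁.val.length + m ≤ 2^q + 1 := by
          rcases hlen₁ with h | h <;> omega
        obtain ⟨s', rfl, hl', hpb⟩ := ih s₁ c u hp' hlen₁'
        refine ⟨s', rfl, by rcases hlen₁ with h | h <;> omega, fun c' =>
          hasPath_cons (heb c') (hpb c')⟩
      · omega

lemma path_from_bT : ∀ (m : ℕ) (s : (TBmod M w K (2^q)).World) (c : Fin (q+2))
    (u : (EFU M w K q).World), HasPath (EFU M w K q) (EFbT M w K q s c) u m →
    ∃ s', u = EFbT M w K q s' c ∧ s'.val.length ≤ s.val.length + m ∧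
      ∀ c', HasPath (EFU M w K q) (EFaT M w K q s c') (EFaT M w K q s' c') m := by
  intro m
  induction m with
  | zero =>
      intro s c u hp
      obtain ⟨f, h0, hm, -⟩ := hp
      refine ⟨s, by rw [← hm, h0], by omega, fun c' => hasPath_refl _⟩
  | succ m ih =>
      intro s c u hp
      obtain ⟨u₁, he, hp'⟩ := hasPath_dest hp
      obtain ⟨s₁, rfl, hlen₁, hea, heb⟩ := edge_bT_cases M w K q he
      obtain ⟨s', rfl, hl', hpa⟩ := ih s₁ c u hp'
      exact ⟨s', rfl, by rcases hlen₁ with h | h <;> omega, fun c' =>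
        hasPath_cons (hea c') (hpa c')⟩

/-- Paths transfer between copies. -/
lemma path_transfer : ∀ (m : ℕ) (z z' : (DSum (Graft M w K (2^q)) (TBmod M w K (2^q))).World)
    (c c' : Fin (q+2)), HasPath (EFU M w K q) (z, c) (z', c) m →
    HasPath (EFU M w K q) (z, c') (z', c') m := by
  intro m
  induction m with
  | zero =>
      intro z z' c c' hp
      obtain ⟨f, h0, hm, -⟩ := hp
      have : z = z' := by
        have := h0.symm.trans hm
        exact congrArg Prod.fst this
      rw [this]
      exact hasPath_refl _
  | succ m ih =>
      intro z z' c c' hp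
      obtain ⟨u₁, he, hp'⟩ := hasPath_dest hp
      have hc : u₁.2 = c := (edge_copy M w K q he).symm
      have hu₁ : u₁ = (u₁.1, c) := by rw [← hc]
      rw [hu₁] at he hp'
      refine hasPath_cons ?_ (ih u₁.1 z' c c' hp')
      rcases he with ⟨t, hR, i, hti⟩ | ⟨t, hR, i, hti⟩
      · obtain ⟨zz, rfl, hD⟩ := hR
        refine Or.inl ⟨fun k => (zz k, c'), ⟨zz, rfl, hD⟩, i, ?_⟩
        exact congrArg (fun y => (y, c')) (congrArg Prod.fst hti)
      · obtain ⟨zz, rfl, hD⟩ := hR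
        refine Or.inr ⟨fun k => (zz k, c'), ⟨zz, rfl, hD⟩, i, ?_⟩
        exact congrArg (fun y => (y, c')) (congrArg Prod.fst hti)

lemma near_transfer {m : ℕ} {z z' : (DSum (Graft M w K (2^q)) (TBmod M w K (2^q))).World}
    {c c' : Fin (q+2)} (h : Near (EFU M w K q) m (z, c) (z', c)) :
    Near (EFU M w K q) m (z, c') (z', c') := by
  obtain ⟨k, hk, hp⟩ := h
  exact ⟨k, hk, path_transfer M w K q k z z' c c' hp⟩

lemma near_same_copy {m : ℕ} {u u' : (EFU M w K q).World}
    (h : Near (EFU M w K q) m u u') : u.2 = u'.2 := by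
  obtain ⟨k, hk, hp⟩ := h
  clear hk
  induction k generalizing u with
  | zero =>
      obtain ⟨f, h0, hm, -⟩ := hp
      rw [← h0, hm]
  | succ k ih =>
      obtain ⟨u₁, he, hp'⟩ := hasPath_dest hp
      rw [edge_copy M w K q he]
      exact ih hp'

end EF


section EF2
variable {n : ℕ} [NeZero n] (M : NModel n) (w : M.World) (K q : ℕ)

@[reducible] def EFRoot : (TBmod M w K (2^q)).World := unravelBRoot (capV M K) w (2^q)

/-- Root-cluster pairs: identical tree nodes (in the main copies), shallow enough. -/
def RCp (r : ℕ) (p : (EFU M w K q).World × (EFU M w K q).World) : Prop :=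
  ∃ s, p.1 = EFaT M w K q s 0 ∧ p.2 = EFbT M w K q s 0 ∧ s.val.length + 2^r ≤ 2^q + 1

/-- The Duplicator invariant. -/
def Inv (r : ℕ) (P : List ((EFU M w K q).World × (EFU M w K q).World)) : Prop :=
  ((EFaT M w K q (EFRoot M w K q) 0, EFbT M w K q (EFRoot M w K q) 0) ∈ P) ∧
  P.length + r ≤ q + 1 ∧
  (∀ p ∈ P, RCp M w K q r p ∨ ∃ z i j, p.1 = (z, i) ∧ p.2 = (z, j)) ∧
  (∀ p ∈ P, ∀ p' ∈ P, ∀ z i j z' i' j', p.1 = (z,i) → p.2 = (z,j) → p'.1 = (z',i') →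
    p'.2 = (z',j') →
    (i = i' → j ≠ j' → ¬ Near (EFU M w K q) r (z,i) (z',i')) ∧
    (j = j' → i ≠ i' → ¬ Near (EFU M w K q) r (z,j) (z',j'))) ∧
  (∀ p ∈ P, ∀ p' ∈ P, ∀ z i j s, p.1 = (z,i) → p.2 = (z,j) → p'.1 = EFaT M w K q s 0 →
    p'.2 = EFbT M w K q s 0 →
    (i = 0 → ¬ Near (EFU M w K q) r (z,i) (EFaT M w K q s 0)) ∧
    (j = 0 → ¬ Near (EFU M w K q) r (z,j) (EFbT M w K q s 0)))

lemma rc_far_absurd {s : (TBmod M w K (2^q)).World}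
    {p : (EFU M w K q).World × (EFU M w K q).World} {z i j}
    (h1 : p.1 = EFaT M w K q s 0) (h2 : p.2 = EFbT M w K q s 0)
    (h3 : p.1 = (z, i)) (h4 : p.2 = (z, j)) : False := by
  have e1 : Sum.inl (Sum.inl s) = z := congrArg Prod.fst (h1.symm.trans h3)
  have e2 : Sum.inr s = z := congrArg Prod.fst (h2.symm.trans h4)
  rw [← e1] at e2
  exact absurd e2 (by simp)

lemma near_of_edge {u u' : (EFU M w K q).World} (r : ℕ) (h : Edge (EFU M w K q) u u') :
    Near (EFU M w K q) r u u' :=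
  ⟨1, Nat.one_le_two_pow, ⟨fun k => if k = 0 then u else u', by simp, by simp,
    fun i hi => by
      have : i = 0 := by omega
      subst this
      simpa using h⟩⟩

lemma inv_V {r : ℕ} {P} (h : Inv M w K q r P) {p} (hp : p ∈ P) (pr : ℕ) :
    (EFU M w K q).V p.1 pr ↔ (EFU M w K q).V p.2 pr := by
  rcases h.2.2.1 p hp with ⟨s, h1, h2, -⟩ | ⟨z, i, j, h1, h2⟩
  · rw [h1, h2]
    exact Iff.rfl
  · rw [h1, h2]

lemma inv_eq {r : ℕ} {P} (h : Inv M w K q r P) {p p'} (hp : p ∈ P) (hp' : p' ∈ P) :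
    p.1 = p'.1 ↔ p.2 = p'.2 := by
  obtain ⟨-, -, hcl, hC2, hC3⟩ := h
  rcases hcl p hp with ⟨s, h1, h2, -⟩ | ⟨z, i, j, h1, h2⟩ <;>
    rcases hcl p' hp' with ⟨s', h1', h2', -⟩ | ⟨z', i', j', h1', h2'⟩
  · rw [h1, h2, h1', h2']
    constructor
    · intro he
      have hss : s = s' := Sum.inl.inj (Sum.inl.inj (congrArg Prod.fst he :
        (Sum.inl (Sum.inl s) : (DSum (Graft M w K (2^q)) (TBmod M w K (2^q))).World) =
          Sum.inl (Sum.inl s')))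
      rw [hss]
    · intro he
      have hss : s = s' := Sum.inr.inj (congrArg Prod.fst he :
        (Sum.inr s : (DSum (Graft M w K (2^q)) (TBmod M w K (2^q))).World) = Sum.inr s')
      rw [hss]
  · constructor
    · intro he
      have h3 : p'.1 = EFaT M w K q s 0 := he.symm.trans h1
      have hi' : i' = 0 := congrArg Prod.snd (h1'.symm.trans h3)
      have hnear : Near (EFU M w K q) r (z', i') (EFaT M w K q s 0) := by
        rw [h1'.symm.trans h3]
        exact near_refl _ _
      exact (((hC3 p' hp' p hp z' i' j' s h1' h2' h1 h2).1 hi') hnear).elim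
    · intro he
      have h3 : p'.2 = EFbT M w K q s 0 := he.symm.trans h2
      have hj' : j' = 0 := congrArg Prod.snd (h2'.symm.trans h3)
      have hnear : Near (EFU M w K q) r (z', j') (EFbT M w K q s 0) := by
        rw [h2'.symm.trans h3]
        exact near_refl _ _
      exact (((hC3 p' hp' p hp z' i' j' s h1' h2' h1 h2).2 hj') hnear).elim
  · constructor
    · intro he
      have h3 : p.1 = EFaT M w K q s' 0 := he.trans h1'
      have hi : i = 0 := congrArg Prod.snd (h1.symm.trans h3)
      have hnear : Near (EFU M w K q) r (z, i) (EFaT M w K q s' 0) := by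
        rw [h1.symm.trans h3]
        exact near_refl _ _
      exact (((hC3 p hp p' hp' z i j s' h1 h2 h1' h2').1 hi) hnear).elim
    · intro he
      have h3 : p.2 = EFbT M w K q s' 0 := he.trans h2'
      have hj : j = 0 := congrArg Prod.snd (h2.symm.trans h3)
      have hnear : Near (EFU M w K q) r (z, j) (EFbT M w K q s' 0) := by
        rw [h2.symm.trans h3]
        exact near_refl _ _
      exact (((hC3 p hp p' hp' z i j s' h1 h2 h1' h2').2 hj) hnear).elim
  · constructor
    · intro he
      have hz : z = z' := congrArg Prod.fst (h1.symm.trans (he.trans h1'))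
      have hi : i = i' := congrArg Prod.snd (h1.symm.trans (he.trans h1'))
      subst hz
      by_cases hj : j = j'
      · rw [h2, h2', hj]
      · exact absurd (near_refl r _) (by
          rw [← hi] at h1'
          exact ((hC2 p hp p' hp' z i j z i j' h1 h2 h1' h2').1 rfl hj))
    · intro he
      have hz : z = z' := congrArg Prod.fst (h2.symm.trans (he.trans h2'))
      have hj : j = j' := congrArg Prod.snd (h2.symm.trans (he.trans h2'))
      subst hz
      by_cases hi : i = i'
      · rw [h1, h1', hi]
      · exact absurd (near_refl r _) (by
          rw [← hj] at h2'
          exact ((hC2 p hp p' hp' z i j z i' j h1 h2 h1' h2').2 rfl hi))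

lemma inv_R {r : ℕ} {P} (h : Inv M w K q r P) {p₀} (hp₀ : p₀ ∈ P)
    {pv : Fin n → (EFU M w K q).World × (EFU M w K q).World} (hpv : ∀ i, pv i ∈ P) :
    (EFU M w K q).R p₀.1 (fun i => (pv i).1) ↔ (EFU M w K q).R p₀.2 (fun i => (pv i).2) := by
  have ipos : Fin n := ⟨0, Nat.pos_of_ne_zero (NeZero.ne n)⟩
  obtain ⟨-, -, hcl, hC2, hC3⟩ := h
  rcases hcl p₀ hp₀ with ⟨s₀, h1, h2, -⟩ | ⟨z, i, j, h1, h2⟩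
  · constructor
    · intro hR
      have hcomp : ∀ k, ∃ sk, (pv k).1 = EFaT M w K q sk 0 ∧ (pv k).2 = EFbT M w K q sk 0 := by
        intro k
        rcases hcl (pv k) (hpv k) with ⟨sk, hk1, hk2, -⟩ | ⟨zk, ik, jk, hk1, hk2⟩
        · exact ⟨sk, hk1, hk2⟩
        · have hedge : Edge (EFU M w K q) p₀.1 ((pv k).1) := rc_of_R hR k
          rw [h1, hk1] at hedge
          have hik : ik = 0 := (edge_copy M w K q hedge).symm
          have hnear := near_of_edge M w K q r (edge_symm hedge)
          exact ((hC3 (pv k) (hpv k) p₀ hp₀ zk ik jk s₀ hk1 hk2 h1 h2).1 hik hnear).elim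
      choose sv hsv1 hsv2 using hcomp
      rw [h1] at hR
      obtain ⟨zv, ht, hD⟩ := hR
      have hz : ∀ k, zv k = Sum.inl (Sum.inl (sv k)) := by
        intro k
        have e1 := congrFun ht k
        rw [hsv1 k] at e1
        exact (congrArg Prod.fst e1).symm
      obtain ⟨gv, hzg, hG⟩ := hD
      rcases hG with ⟨st, hgs, hT⟩ | ⟨hlen, ut, hgu, -⟩
      · subst hgs
        have hsv : st = sv := by
          funext k
          have e2 := congrFun hzg k
          rw [hz k] at e2
          exact (Sum.inl.inj (Sum.inl.inj e2)).symm
        rw [hsv] at hT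
        rw [h2, show (fun k => (pv k).2) = fun k => EFbT M w K q (sv k) 0 from
          funext (fun k => hsv2 k)]
        exact ⟨fun k => Sum.inr (sv k), rfl, sv, rfl, hT⟩
      · subst hgu
        have e2 := congrFun hzg ipos
        rw [hz ipos] at e2
        exact absurd e2 (by simp)
    · intro hR
      have hcomp : ∀ k, ∃ sk, (pv k).1 = EFaT M w K q sk 0 ∧ (pv k).2 = EFbT M w K q sk 0 := by
        intro k
        rcases hcl (pv k) (hpv k) with ⟨sk, hk1, hk2, -⟩ | ⟨zk, ik, jk, hk1, hk2⟩
        · exact ⟨sk, hk1, hk2⟩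
        · have hedge : Edge (EFU M w K q) p₀.2 ((pv k).2) := rc_of_R hR k
          rw [h2, hk2] at hedge
          have hjk : jk = 0 := (edge_copy M w K q hedge).symm
          have hnear := near_of_edge M w K q r (edge_symm hedge)
          exact ((hC3 (pv k) (hpv k) p₀ hp₀ zk ik jk s₀ hk1 hk2 h1 h2).2 hjk hnear).elim
      choose sv hsv1 hsv2 using hcomp
      rw [h2] at hR
      obtain ⟨zv, ht, hD⟩ := hR
      have hz : ∀ k, zv k = Sum.inr (sv k) := by
        intro k
        have e1 := congrFun ht k
        rw [hsv2 k] at e1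
        exact (congrArg Prod.fst e1).symm
      obtain ⟨tv, hzt, hT⟩ := hD
      have htv : tv = sv := by
        funext k
        have e2 := congrFun hzt k
        rw [hz k] at e2
        exact (Sum.inr.inj e2).symm
      rw [htv] at hT
      rw [h1, show (fun k => (pv k).1) = fun k => EFaT M w K q (sv k) 0 from
        funext (fun k => hsv1 k)]
      exact ⟨fun k => Sum.inl (Sum.inl (sv k)), rfl, fun k => Sum.inl (sv k), rfl,
        Or.inl ⟨sv, rfl, hT⟩⟩
  · constructor
    · intro hR
      have hcomp : ∀ k, ∃ zk, (pv k).1 = (zk, i) ∧ (pv k).2 = (zk, j) := by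
        intro k
        rcases hcl (pv k) (hpv k) with ⟨sk, hk1, hk2, -⟩ | ⟨zk, ik, jk, hk1, hk2⟩
        · have hedge : Edge (EFU M w K q) p₀.1 ((pv k).1) := rc_of_R hR k
          rw [h1, hk1] at hedge
          have hi0 : i = 0 := edge_copy M w K q hedge
          have hnear := near_of_edge M w K q r hedge
          exact ((hC3 p₀ hp₀ (pv k) (hpv k) z i j sk h1 h2 hk1 hk2).1 hi0 hnear).elim
        · have hedge : Edge (EFU M w K q) p₀.1 ((pv k).1) := rc_of_R hR k
          rw [h1, hk1] at hedge
          have hik : ik = i := (edge_copy M w K q hedge).symm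
          have hjk : jk = j := by
            by_contra hne
            exact (hC2 p₀ hp₀ (pv k) (hpv k) z i j zk ik jk h1 h2 hk1 hk2).1 hik.symm
              (fun hjj => hne hjj.symm) (near_of_edge M w K q r hedge)
          rw [hik] at hk1
          rw [hjk] at hk2
          exact ⟨zk, hk1, hk2⟩
      choose zv hzv1 hzv2 using hcomp
      rw [h1] at hR
      obtain ⟨zt, ht, hD⟩ := hR
      have hzz : zt = zv := by
        funext k
        have e := congrFun ht k
        rw [hzv1 k] at e
        exact (congrArg Prod.fst e).symm
      rw [hzz] at hD
      rw [h2, show (fun k => (pv k).2) = fun k => ((zv k, j) : (EFU M w K q).World) from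
        funext hzv2]
      exact ⟨zv, rfl, hD⟩
    · intro hR
      have hcomp : ∀ k, ∃ zk, (pv k).1 = (zk, i) ∧ (pv k).2 = (zk, j) := by
        intro k
        rcases hcl (pv k) (hpv k) with ⟨sk, hk1, hk2, -⟩ | ⟨zk, ik, jk, hk1, hk2⟩
        · have hedge : Edge (EFU M w K q) p₀.2 ((pv k).2) := rc_of_R hR k
          rw [h2, hk2] at hedge
          have hj0 : j = 0 := edge_copy M w K q hedge
          have hnear := near_of_edge M w K q r hedge
          exact ((hC3 p₀ hp₀ (pv k) (hpv k) z i j sk h1 h2 hk1 hk2).2 hj0 hnear).elim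
        · have hedge : Edge (EFU M w K q) p₀.2 ((pv k).2) := rc_of_R hR k
          rw [h2, hk2] at hedge
          have hjk : jk = j := (edge_copy M w K q hedge).symm
          have hik : ik = i := by
            by_contra hne
            exact (hC2 p₀ hp₀ (pv k) (hpv k) z i j zk ik jk h1 h2 hk1 hk2).2 hjk.symm
              (fun hii => hne hii.symm) (near_of_edge M w K q r hedge)
          rw [hik] at hk1
          rw [hjk] at hk2
          exact ⟨zk, hk1, hk2⟩
      choose zv hzv1 hzv2 using hcomp
      rw [h2] at hR
      obtain ⟨zt, ht, hD⟩ := hR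
      have hzz : zt = zv := by
        funext k
        have e := congrFun ht k
        rw [hzv2 k] at e
        exact (congrArg Prod.fst e).symm
      rw [hzz] at hD
      rw [h1, show (fun k => (pv k).1) = fun k => ((zv k, i) : (EFU M w K q).World) from
        funext hzv1]
      exact ⟨zv, rfl, hD⟩

lemma pair_inj {α β : Type} {a c : α} {b d : β} (h : (a, b) = (c, d)) : a = c ∧ b = d :=
  ⟨congrArg Prod.fst h, congrArg Prod.snd h⟩

lemma ext_a {r : ℕ} {P} (h : Inv M w K q (r+1) P) (x : (EFU M w K q).World) :
    ∃ y, Inv M w K q r ((x, y) :: P) := by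
  obtain ⟨hroot, hlen, hcl, hC2, hC3⟩ := h
  have hmono : ∀ (u u' : (EFU M w K q).World), Near (EFU M w K q) r u u' →
      Near (EFU M w K q) (r+1) u u' := fun u u' => near_mono (by omega)
  have h2r : 2^r ≤ 2^(r+1) := Nat.pow_le_pow_right (by omega) (by omega)
  have h2s : 2^(r+1) = 2^r + 2^r := by rw [pow_succ]; omega
  by_cases hA : ∃ pw ∈ P, ∃ s', pw.1 = EFaT M w K q s' 0 ∧ pw.2 = EFbT M w K q s' 0 ∧
      s'.val.length + 2^(r+1) ≤ 2^q + 1 ∧ Near (EFU M w K q) r x pw.1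
  · obtain ⟨pw, hpw, s', hw1, hw2, hwlen, hnear⟩ := hA
    have hnx : Near (EFU M w K q) r x (EFaT M w K q s' 0) := hw1 ▸ hnear
    obtain ⟨m, hm, hpath⟩ := near_symm hnx
    have hpre : s'.val.length + m ≤ 2^q + 1 := by omega
    obtain ⟨s₀, hx, hs₀len, htrans⟩ := path_from_aT M w K q m s' 0 x hpath hpre
    subst hx
    have hnb : Near (EFU M w K q) r (EFbT M w K q s' 0) (EFbT M w K q s₀ 0) :=
      ⟨m, hm, htrans 0⟩
    refine ⟨EFbT M w K q s₀ 0, List.mem_cons_of_mem _ hroot,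
      by simp only [List.length_cons]; omega, ?_, ?_, ?_⟩
    · intro p hp
      rcases List.mem_cons.mp hp with rfl | hp
      · exact Or.inl ⟨s₀, rfl, rfl, by omega⟩
      · rcases hcl p hp with ⟨s, k1, k2, k3⟩ | hfar
        · exact Or.inl ⟨s, k1, k2, by omega⟩
        · exact Or.inr hfar
    · intro p hp p' hp' z i j z' i' j' e1 e2 e3 e4
      rcases List.mem_cons.mp hp with rfl | hp
      · exact (rc_far_absurd M w K q rfl rfl e1 e2).elim
      · rcases List.mem_cons.mp hp' with rfl | hp'
        · exact (rc_far_absurd M w K q rfl rfl e3 e4).elim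
        · have old := hC2 p hp p' hp' z i j z' i' j' e1 e2 e3 e4
          exact ⟨fun a b hn => old.1 a b (hmono _ _ hn),
            fun a b hn => old.2 a b (hmono _ _ hn)⟩
    · intro p hp p' hp' z i j s e1 e2 e3 e4
      rcases List.mem_cons.mp hp with rfl | hp
      · exact (rc_far_absurd M w K q rfl rfl e1 e2).elim
      · rcases List.mem_cons.mp hp' with rfl | hp'
        · have hs : s₀ = s := Sum.inl.inj (Sum.inl.inj ((pair_inj e3).1 :
            (Sum.inl (Sum.inl s₀) : (DSum (Graft M w K (2^q)) (TBmod M w K (2^q))).World) =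
              Sum.inl (Sum.inl s)))
          subst hs
          constructor
          · intro hi0 hn2
            exact (hC3 p hp pw hpw z i j s' e1 e2 hw1 hw2).1 hi0 (near_trans hn2 hnx)
          · intro hj0 hn2
            exact (hC3 p hp pw hpw z i j s' e1 e2 hw1 hw2).2 hj0
              (near_trans hn2 (near_symm hnb))
        · have old := hC3 p hp p' hp' z i j s e1 e2 e3 e4
          exact ⟨fun a hn => old.1 a (hmono _ _ hn), fun a hn => old.2 a (hmono _ _ hn)⟩
  · by_cases hB : ∃ pw ∈ P, ∃ z' i' j', pw.1 = ((z', i') : (EFU M w K q).World) ∧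
        pw.2 = ((z', j') : (EFU M w K q).World) ∧ Near (EFU M w K q) r x pw.1
    · obtain ⟨pw, hpw, zw, iw, jw, hw1, hw2, hnear⟩ := hB
      have hnx : Near (EFU M w K q) r x ((zw, iw) : (EFU M w K q).World) := hw1 ▸ hnear
      have hxi : x.2 = iw := near_same_copy M w K q hnx
      have hx : x = (x.1, iw) := by rw [← hxi]
      -- Near between the first components, in copy iw
      have hbase : Near (EFU M w K q) r ((x.1, iw) : (EFU M w K q).World) (zw, iw) :=
        hx ▸ hnx
      refine ⟨(x.1, jw), List.mem_cons_of_mem _ hroot,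
        by simp only [List.length_cons]; omega, ?_, ?_, ?_⟩
      · intro p hp
        rcases List.mem_cons.mp hp with rfl | hp
        · exact Or.inr ⟨x.1, iw, jw, hx, rfl⟩
        · rcases hcl p hp with ⟨s, k1, k2, k3⟩ | hfar
          · exact Or.inl ⟨s, k1, k2, by omega⟩
          · exact Or.inr hfar
      · intro p hp p' hp' z i j z' i' j' e1 e2 e3 e4
        rcases List.mem_cons.mp hp with rfl | hp <;>
          rcases List.mem_cons.mp hp' with rfl | hp'
        · -- both new
          obtain ⟨ez, ei⟩ := pair_inj (hx.symm.trans (e1 : x = (z, i)))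
          obtain ⟨ez2, ej⟩ := pair_inj (e2 : ((x.1, jw) : (EFU M w K q).World) = (z, j))
          obtain ⟨ez3, ei'⟩ := pair_inj (hx.symm.trans (e3 : x = (z', i')))
          obtain ⟨ez4, ej'⟩ := pair_inj (e4 : ((x.1, jw) : (EFU M w K q).World) = (z', j'))
          exact ⟨fun _ hjj _ => hjj (ej.symm.trans ej'),
            fun _ hii _ => hii (ei.symm.trans ei')⟩
        · -- p new, p' old
          obtain ⟨ez, ei⟩ := pair_inj (hx.symm.trans (e1 : x = (z, i)))
          obtain ⟨ez2, ej⟩ := pair_inj (e2 : ((x.1, jw) : (EFU M w K q).World) = (z, j))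
          constructor
          · intro hieq hjne hn
            -- hn : Near r (z,i) (z',i');  (z,i) = (x.1, iw)
            have hn' : Near (EFU M w K q) r ((x.1, iw) : (EFU M w K q).World) (z', i') := by
              rw [show ((x.1, iw) : (EFU M w K q).World) = (z, i) from by rw [← ez, ← ei]]
              exact hn
            exact (hC2 pw hpw p' hp' zw iw jw z' i' j' hw1 hw2 e3 e4).1
              (ei.trans hieq) (fun hjj => hjne (ej.symm.trans hjj))
              (near_trans (near_symm hbase) hn')
          · intro hjeq hine hn
            -- hn : Near r (z,j) (z',j');  (z,j) = (x.1, jw)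
            have hn' : Near (EFU M w K q) r ((x.1, jw) : (EFU M w K q).World) (z', j') := by
              rw [show ((x.1, jw) : (EFU M w K q).World) = (z, j) from by rw [← ez2, ← ej]]
              exact hn
            have hbase' : Near (EFU M w K q) r ((x.1, jw) : (EFU M w K q).World) (zw, jw) :=
              near_transfer M w K q hbase
            exact (hC2 pw hpw p' hp' zw iw jw z' i' j' hw1 hw2 e3 e4).2
              (ej.trans hjeq) (fun hii => hine (ei.symm.trans hii))
              (near_trans (near_symm hbase') hn')
        · -- p old, p' new
          obtain ⟨ez, ei⟩ := pair_inj (hx.symm.trans (e3 : x = (z', i')))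
          obtain ⟨ez2, ej⟩ := pair_inj (e4 : ((x.1, jw) : (EFU M w K q).World) = (z', j'))
          constructor
          · intro hieq hjne hn
            have hn' : Near (EFU M w K q) r ((x.1, iw) : (EFU M w K q).World) (z, i) := by
              rw [show ((x.1, iw) : (EFU M w K q).World) = (z', i') from by rw [← ez, ← ei]]
              exact near_symm hn
            exact (hC2 pw hpw p hp zw iw jw z i j hw1 hw2 e1 e2).1
              (ei.trans hieq.symm) (fun hjj => hjne (hjj.symm.trans ej))
              (near_trans (near_symm hbase) hn')
          · intro hjeq hine hn
            have hn' : Near (EFU M w K q) r ((x.1, jw) : (EFU M w K q).World) (z, j) := by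
              rw [show ((x.1, jw) : (EFU M w K q).World) = (z', j') from by rw [← ez2, ← ej]]
              exact near_symm hn
            have hbase' : Near (EFU M w K q) r ((x.1, jw) : (EFU M w K q).World) (zw, jw) :=
              near_transfer M w K q hbase
            exact (hC2 pw hpw p hp zw iw jw z i j hw1 hw2 e1 e2).2
              (ej.trans hjeq.symm) (fun hii => hine (hii.symm.trans ei))
              (near_trans (near_symm hbase') hn')
        · have old := hC2 p hp p' hp' z i j z' i' j' e1 e2 e3 e4
          exact ⟨fun a b hn => old.1 a b (hmono _ _ hn),
            fun a b hn => old.2 a b (hmono _ _ hn)⟩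
      · intro p hp p' hp' z i j s e1 e2 e3 e4
        rcases List.mem_cons.mp hp with rfl | hp <;>
          rcases List.mem_cons.mp hp' with rfl | hp'
        · -- both new: contradiction, the new pair cannot match the RC pattern
          have c1 : x.1 = Sum.inl (Sum.inl s) := congrArg Prod.fst (e3 : x = _)
          have c2 : x.1 = Sum.inr s := (pair_inj (e4 :
            ((x.1, jw) : (EFU M w K q).World) = _)).1
          exact absurd (c1.symm.trans c2) (by simp)
        · -- p new (far pattern), p' old (RC pattern)
          obtain ⟨ez, ei⟩ := pair_inj (hx.symm.trans (e1 : x = (z, i)))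
          obtain ⟨ez2, ej⟩ := pair_inj (e2 : ((x.1, jw) : (EFU M w K q).World) = (z, j))
          constructor
          · intro hi0 hn
            rcases hcl p' hp' with ⟨s₃, k1, k2, k3⟩ | ⟨zz, ii, jj, k1, k2⟩
            · have hs3 : s₃ = s := Sum.inl.inj (Sum.inl.inj ((pair_inj
                (k1.symm.trans e3)).1))
              subst hs3
              exact hA ⟨p', hp', s₃, k1, k2, k3, by
                rw [k1, show x = (z, i) from e1]
                exact (e3.symm.trans k1) ▸ hn⟩
            · exact (rc_far_absurd M w K q e3 e4 k1 k2).elim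
          · intro hj0 hn
            have hn' : Near (EFU M w K q) r ((x.1, jw) : (EFU M w K q).World)
                (EFbT M w K q s 0) := by
              rw [show ((x.1, jw) : (EFU M w K q).World) = (z, j) from by rw [← ez2, ← ej]]
              exact hn
            have hbase' : Near (EFU M w K q) r ((x.1, jw) : (EFU M w K q).World) (zw, jw) :=
              near_transfer M w K q hbase
            exact (hC3 pw hpw p' hp' zw iw jw s hw1 hw2 e3 e4).2 (ej.trans hj0)
              (near_trans (near_symm hbase') hn')
        · -- p old (far), p' new as RC pattern: impossible
          have c1 : x.1 = Sum.inl (Sum.inl s) := congrArg Prod.fst (e3 : x = _)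
          have c2 : x.1 = Sum.inr s := (pair_inj (e4 :
            ((x.1, jw) : (EFU M w K q).World) = _)).1
          exact absurd (c1.symm.trans c2) (by simp)
        · have old := hC3 p hp p' hp' z i j s e1 e2 e3 e4
          exact ⟨fun a hn => old.1 a (hmono _ _ hn), fun a hn => old.2 a (hmono _ _ hn)⟩
    · -- fresh target
      obtain ⟨jf, hjf⟩ := exists_fresh ((0 : Fin (q+2)) :: P.map (fun p => p.2.2))
        (by simp only [List.length_cons, List.length_map]; omega)
      have hf0 : jf ≠ 0 := fun e => hjf (by rw [e]; exact List.mem_cons_self)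
      have hfP : ∀ p ∈ P, p.2.2 ≠ jf := fun p hp e =>
        hjf (List.mem_cons_of_mem _ (List.mem_map.mpr ⟨p, hp, e⟩))
      refine ⟨(x.1, jf), List.mem_cons_of_mem _ hroot,
        by simp only [List.length_cons]; omega, ?_, ?_, ?_⟩
      · intro p hp
        rcases List.mem_cons.mp hp with rfl | hp
        · exact Or.inr ⟨x.1, x.2, jf, rfl, rfl⟩
        · rcases hcl p hp with ⟨s, k1, k2, k3⟩ | hfar
          · exact Or.inl ⟨s, k1, k2, by omega⟩
          · exact Or.inr hfar
      · intro p hp p' hp' z i j z' i' j' e1 e2 e3 e4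
        rcases List.mem_cons.mp hp with rfl | hp <;>
          rcases List.mem_cons.mp hp' with rfl | hp'
        · exact ⟨fun _ hjj _ => hjj ((pair_inj (e2 :
              ((x.1, jf) : (EFU M w K q).World) = (z, j))).2.symm.trans
              (pair_inj (e4 : ((x.1, jf) : (EFU M w K q).World) = (z', j'))).2),
            fun _ hii _ => hii ((congrArg Prod.snd (e1 : x = (z, i))).symm.trans
              (congrArg Prod.snd (e3 : x = (z', i'))))⟩
        · constructor
          · intro _ _ hn
            exact hB ⟨p', hp', z', i', j', e3, e4, by
              rw [e3, show x = (z, i) from e1]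
              exact hn⟩
          · intro hjeq _ _
            have hj : j = jf := (pair_inj (e2 :
              ((x.1, jf) : (EFU M w K q).World) = (z, j))).2.symm
            exact (hfP p' hp' ((congrArg Prod.snd e4).trans (hjeq.symm.trans hj))).elim
        · constructor
          · intro _ _ hn
            exact hB ⟨p, hp, z, i, j, e1, e2, by
              rw [e1, show x = (z', i') from e3]
              exact near_symm hn⟩
          · intro hjeq _ _
            have hj : j' = jf := (pair_inj (e4 :
              ((x.1, jf) : (EFU M w K q).World) = (z', j'))).2.symm
            exact (hfP p hp ((congrArg Prod.snd e2).trans (hjeq.trans hj))).elim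
        · have old := hC2 p hp p' hp' z i j z' i' j' e1 e2 e3 e4
          exact ⟨fun a b hn => old.1 a b (hmono _ _ hn),
            fun a b hn => old.2 a b (hmono _ _ hn)⟩
      · intro p hp p' hp' z i j s e1 e2 e3 e4
        rcases List.mem_cons.mp hp with rfl | hp <;>
          rcases List.mem_cons.mp hp' with rfl | hp'
        · exact absurd ((pair_inj (e4 :
            ((x.1, jf) : (EFU M w K q).World) = _)).2) hf0
        · constructor
          · intro hi0 hn
            rcases hcl p' hp' with ⟨s₃, k1, k2, k3⟩ | ⟨zz, ii, jj, k1, k2⟩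
            · have hs3 : s₃ = s := Sum.inl.inj (Sum.inl.inj ((pair_inj
                (k1.symm.trans e3)).1))
              subst hs3
              exact hA ⟨p', hp', s₃, k1, k2, k3, by
                rw [k1, show x = (z, i) from e1]
                exact (e3.symm.trans k1) ▸ hn⟩
            · exact (rc_far_absurd M w K q e3 e4 k1 k2).elim
          · intro hj0 _
            have hj : j = jf := (pair_inj (e2 :
              ((x.1, jf) : (EFU M w K q).World) = (z, j))).2.symm
            exact (hf0 (hj.symm.trans hj0)).elim
        · exact absurd ((pair_inj (e4 :
            ((x.1, jf) : (EFU M w K q).World) = _)).2) hf0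
        · have old := hC3 p hp p' hp' z i j s e1 e2 e3 e4
          exact ⟨fun a hn => old.1 a (hmono _ _ hn), fun a hn => old.2 a (hmono _ _ hn)⟩

lemma ext_b {r : ℕ} {P} (h : Inv M w K q (r+1) P) (y : (EFU M w K q).World) :
    ∃ x, Inv M w K q r ((x, y) :: P) := by
  obtain ⟨hroot, hlen, hcl, hC2, hC3⟩ := h
  have hmono : ∀ (u u' : (EFU M w K q).World), Near (EFU M w K q) r u u' →
      Near (EFU M w K q) (r+1) u u' := fun u u' => near_mono (by omega)
  have h2r : 2^r ≤ 2^(r+1) := Nat.pow_le_pow_right (by omega) (by omega)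
  have h2s : 2^(r+1) = 2^r + 2^r := by rw [pow_succ]; omega
  by_cases hA : ∃ pw ∈ P, ∃ s', pw.1 = EFaT M w K q s' 0 ∧ pw.2 = EFbT M w K q s' 0 ∧
      s'.val.length + 2^(r+1) ≤ 2^q + 1 ∧ Near (EFU M w K q) r y pw.2
  · obtain ⟨pw, hpw, s', hw1, hw2, hwlen, hnear⟩ := hA
    have hny : Near (EFU M w K q) r y (EFbT M w K q s' 0) := hw2 ▸ hnear
    obtain ⟨m, hm, hpath⟩ := near_symm hny
    obtain ⟨s₀, hy, hs₀len, htrans⟩ := path_from_bT M w K q m s' 0 y hpath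
    subst hy
    have hna : Near (EFU M w K q) r (EFaT M w K q s' 0) (EFaT M w K q s₀ 0) :=
      ⟨m, hm, htrans 0⟩
    refine ⟨EFaT M w K q s₀ 0, List.mem_cons_of_mem _ hroot,
      by simp only [List.length_cons]; omega, ?_, ?_, ?_⟩
    · intro p hp
      rcases List.mem_cons.mp hp with rfl | hp
      · exact Or.inl ⟨s₀, rfl, rfl, by omega⟩
      · rcases hcl p hp with ⟨s, k1, k2, k3⟩ | hfar
        · exact Or.inl ⟨s, k1, k2, by omega⟩
        · exact Or.inr hfar
    · intro p hp p' hp' z i j z' i' j' e1 e2 e3 e4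
      rcases List.mem_cons.mp hp with rfl | hp
      · exact (rc_far_absurd M w K q rfl rfl e1 e2).elim
      · rcases List.mem_cons.mp hp' with rfl | hp'
        · exact (rc_far_absurd M w K q rfl rfl e3 e4).elim
        · have old := hC2 p hp p' hp' z i j z' i' j' e1 e2 e3 e4
          exact ⟨fun a b hn => old.1 a b (hmono _ _ hn),
            fun a b hn => old.2 a b (hmono _ _ hn)⟩
    · intro p hp p' hp' z i j s e1 e2 e3 e4
      rcases List.mem_cons.mp hp with rfl | hp
      · exact (rc_far_absurd M w K q rfl rfl e1 e2).elim
      · rcases List.mem_cons.mp hp' with rfl | hp'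
        · have hs : s₀ = s := Sum.inr.inj ((pair_inj e4).1 :
            (Sum.inr s₀ : (DSum (Graft M w K (2^q)) (TBmod M w K (2^q))).World) = Sum.inr s)
          subst hs
          constructor
          · intro hi0 hn2
            exact (hC3 p hp pw hpw z i j s' e1 e2 hw1 hw2).1 hi0
              (near_trans hn2 (near_symm hna))
          · intro hj0 hn2
            exact (hC3 p hp pw hpw z i j s' e1 e2 hw1 hw2).2 hj0 (near_trans hn2 hny)
        · have old := hC3 p hp p' hp' z i j s e1 e2 e3 e4
          exact ⟨fun a hn => old.1 a (hmono _ _ hn), fun a hn => old.2 a (hmono _ _ hn)⟩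
  · by_cases hB : ∃ pw ∈ P, ∃ z' i' j', pw.1 = ((z', i') : (EFU M w K q).World) ∧
        pw.2 = ((z', j') : (EFU M w K q).World) ∧ Near (EFU M w K q) r y pw.2
    · obtain ⟨pw, hpw, zw, iw, jw, hw1, hw2, hnear⟩ := hB
      have hny : Near (EFU M w K q) r y ((zw, jw) : (EFU M w K q).World) := hw2 ▸ hnear
      have hyj : y.2 = jw := near_same_copy M w K q hny
      have hy : y = (y.1, jw) := by rw [← hyj]
      have hbase : Near (EFU M w K q) r ((y.1, jw) : (EFU M w K q).World) (zw, jw) :=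
        hy ▸ hny
      refine ⟨(y.1, iw), List.mem_cons_of_mem _ hroot,
        by simp only [List.length_cons]; omega, ?_, ?_, ?_⟩
      · intro p hp
        rcases List.mem_cons.mp hp with rfl | hp
        · exact Or.inr ⟨y.1, iw, jw, rfl, hy⟩
        · rcases hcl p hp with ⟨s, k1, k2, k3⟩ | hfar
          · exact Or.inl ⟨s, k1, k2, by omega⟩
          · exact Or.inr hfar
      · intro p hp p' hp' z i j z' i' j' e1 e2 e3 e4
        rcases List.mem_cons.mp hp with rfl | hp <;>
          rcases List.mem_cons.mp hp' with rfl | hp'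
        · obtain ⟨ez, ei⟩ := pair_inj (e1 : ((y.1, iw) : (EFU M w K q).World) = (z, i))
          obtain ⟨ez2, ej⟩ := pair_inj (hy.symm.trans (e2 : y = (z, j)))
          obtain ⟨ez3, ei'⟩ := pair_inj (e3 : ((y.1, iw) : (EFU M w K q).World) = (z', i'))
          obtain ⟨ez4, ej'⟩ := pair_inj (hy.symm.trans (e4 : y = (z', j')))
          exact ⟨fun _ hjj _ => hjj (ej.symm.trans ej'),
            fun _ hii _ => hii (ei.symm.trans ei')⟩
        · -- p new, p' old
          obtain ⟨ez, ei⟩ := pair_inj (e1 : ((y.1, iw) : (EFU M w K q).World) = (z, i))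
          obtain ⟨ez2, ej⟩ := pair_inj (hy.symm.trans (e2 : y = (z, j)))
          constructor
          · intro hieq hjne hn
            have hn' : Near (EFU M w K q) r ((y.1, iw) : (EFU M w K q).World) (z', i') := by
              rw [show ((y.1, iw) : (EFU M w K q).World) = (z, i) from by rw [← ez, ← ei]]
              exact hn
            have hbase' : Near (EFU M w K q) r ((y.1, iw) : (EFU M w K q).World) (zw, iw) :=
              near_transfer M w K q hbase
            exact (hC2 pw hpw p' hp' zw iw jw z' i' j' hw1 hw2 e3 e4).1
              (ei.trans hieq) (fun hjj => hjne (ej.symm.trans hjj))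
              (near_trans (near_symm hbase') hn')
          · intro hjeq hine hn
            have hn' : Near (EFU M w K q) r ((y.1, jw) : (EFU M w K q).World) (z', j') := by
              rw [show ((y.1, jw) : (EFU M w K q).World) = (z, j) from by rw [← ez2, ← ej]]
              exact hn
            exact (hC2 pw hpw p' hp' zw iw jw z' i' j' hw1 hw2 e3 e4).2
              (ej.trans hjeq) (fun hii => hine (ei.symm.trans hii))
              (near_trans (near_symm hbase) hn')
        · -- p old, p' new
          obtain ⟨ez, ei⟩ := pair_inj (e3 : ((y.1, iw) : (EFU M w K q).World) = (z', i'))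
          obtain ⟨ez2, ej⟩ := pair_inj (hy.symm.trans (e4 : y = (z', j')))
          constructor
          · intro hieq hjne hn
            have hn' : Near (EFU M w K q) r ((y.1, iw) : (EFU M w K q).World) (z, i) := by
              rw [show ((y.1, iw) : (EFU M w K q).World) = (z', i') from by rw [← ez, ← ei]]
              exact near_symm hn
            have hbase' : Near (EFU M w K q) r ((y.1, iw) : (EFU M w K q).World) (zw, iw) :=
              near_transfer M w K q hbase
            exact (hC2 pw hpw p hp zw iw jw z i j hw1 hw2 e1 e2).1
              (ei.trans hieq.symm) (fun hjj => hjne (hjj.symm.trans ej))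
              (near_trans (near_symm hbase') hn')
          · intro hjeq hine hn
            have hn' : Near (EFU M w K q) r ((y.1, jw) : (EFU M w K q).World) (z, j) := by
              rw [show ((y.1, jw) : (EFU M w K q).World) = (z', j') from by rw [← ez2, ← ej]]
              exact near_symm hn
            exact (hC2 pw hpw p hp zw iw jw z i j hw1 hw2 e1 e2).2
              (ej.trans hjeq.symm) (fun hii => hine (hii.symm.trans ei))
              (near_trans (near_symm hbase) hn')
        · have old := hC2 p hp p' hp' z i j z' i' j' e1 e2 e3 e4
          exact ⟨fun a b hn => old.1 a b (hmono _ _ hn),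
            fun a b hn => old.2 a b (hmono _ _ hn)⟩
      · intro p hp p' hp' z i j s e1 e2 e3 e4
        rcases List.mem_cons.mp hp with rfl | hp <;>
          rcases List.mem_cons.mp hp' with rfl | hp'
        · have c1 : y.1 = Sum.inl (Sum.inl s) := (pair_inj (e3 :
            ((y.1, iw) : (EFU M w K q).World) = _)).1
          have c2 : y.1 = Sum.inr s := congrArg Prod.fst (e4 : y = _)
          exact absurd (c1.symm.trans c2) (by simp)
        · -- p new (far), p' old (RC)
          obtain ⟨ez, ei⟩ := pair_inj (e1 : ((y.1, iw) : (EFU M w K q).World) = (z, i))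
          obtain ⟨ez2, ej⟩ := pair_inj (hy.symm.trans (e2 : y = (z, j)))
          constructor
          · intro hi0 hn
            have hn' : Near (EFU M w K q) r ((y.1, iw) : (EFU M w K q).World)
                (EFaT M w K q s 0) := by
              rw [show ((y.1, iw) : (EFU M w K q).World) = (z, i) from by rw [← ez, ← ei]]
              exact hn
            have hbase' : Near (EFU M w K q) r ((y.1, iw) : (EFU M w K q).World) (zw, iw) :=
              near_transfer M w K q hbase
            exact (hC3 pw hpw p' hp' zw iw jw s hw1 hw2 e3 e4).1 (ei.trans hi0)
              (near_trans (near_symm hbase') hn')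
          · intro hj0 hn
            rcases hcl p' hp' with ⟨s₃, k1, k2, k3⟩ | ⟨zz, ii, jj, k1, k2⟩
            · have hs3 : s₃ = s := Sum.inl.inj (Sum.inl.inj ((pair_inj
                (k1.symm.trans e3)).1))
              subst hs3
              exact hA ⟨p', hp', s₃, k1, k2, k3, by
                rw [k2, show y = (z, j) from e2]
                exact (e4.symm.trans k2) ▸ hn⟩
            · exact (rc_far_absurd M w K q e3 e4 k1 k2).elim
        · have c1 : y.1 = Sum.inl (Sum.inl s) := (pair_inj (e3 :
            ((y.1, iw) : (EFU M w K q).World) = _)).1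
          have c2 : y.1 = Sum.inr s := congrArg Prod.fst (e4 : y = _)
          exact absurd (c1.symm.trans c2) (by simp)
        · have old := hC3 p hp p' hp' z i j s e1 e2 e3 e4
          exact ⟨fun a hn => old.1 a (hmono _ _ hn), fun a hn => old.2 a (hmono _ _ hn)⟩
    · -- fresh source
      obtain ⟨jf, hjf⟩ := exists_fresh ((0 : Fin (q+2)) :: P.map (fun p => p.1.2))
        (by simp only [List.length_cons, List.length_map]; omega)
      have hf0 : jf ≠ 0 := fun e => hjf (by rw [e]; exact List.mem_cons_self)
      have hfP : ∀ p ∈ P, p.1.2 ≠ jf := fun p hp e =>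
        hjf (List.mem_cons_of_mem _ (List.mem_map.mpr ⟨p, hp, e⟩))
      refine ⟨(y.1, jf), List.mem_cons_of_mem _ hroot,
        by simp only [List.length_cons]; omega, ?_, ?_, ?_⟩
      · intro p hp
        rcases List.mem_cons.mp hp with rfl | hp
        · exact Or.inr ⟨y.1, jf, y.2, rfl, rfl⟩
        · rcases hcl p hp with ⟨s, k1, k2, k3⟩ | hfar
          · exact Or.inl ⟨s, k1, k2, by omega⟩
          · exact Or.inr hfar
      · intro p hp p' hp' z i j z' i' j' e1 e2 e3 e4
        rcases List.mem_cons.mp hp with rfl | hp <;>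
          rcases List.mem_cons.mp hp' with rfl | hp'
        · exact ⟨fun _ hjj _ => hjj ((congrArg Prod.snd (e2 : y = (z, j))).symm.trans
              (congrArg Prod.snd (e4 : y = (z', j')))),
            fun _ hii _ => hii ((pair_inj (e1 :
              ((y.1, jf) : (EFU M w K q).World) = (z, i))).2.symm.trans
              (pair_inj (e3 : ((y.1, jf) : (EFU M w K q).World) = (z', i'))).2)⟩
        · constructor
          · intro hieq _ _
            have hi : i = jf := (pair_inj (e1 :
              ((y.1, jf) : (EFU M w K q).World) = (z, i))).2.symm
            exact (hfP p' hp' ((congrArg Prod.snd e3).trans (hieq.symm.trans hi))).elim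
          · intro _ _ hn
            exact hB ⟨p', hp', z', i', j', e3, e4, by
              rw [e4, show y = (z, j) from e2]
              exact hn⟩
        · constructor
          · intro hieq _ _
            have hi : i' = jf := (pair_inj (e3 :
              ((y.1, jf) : (EFU M w K q).World) = (z', i'))).2.symm
            exact (hfP p hp ((congrArg Prod.snd e1).trans (hieq.trans hi))).elim
          · intro _ _ hn
            exact hB ⟨p, hp, z, i, j, e1, e2, by
              rw [e2, show y = (z', j') from e4]
              exact near_symm hn⟩
        · have old := hC2 p hp p' hp' z i j z' i' j' e1 e2 e3 e4
          exact ⟨fun a b hn => old.1 a b (hmono _ _ hn),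
            fun a b hn => old.2 a b (hmono _ _ hn)⟩
      · intro p hp p' hp' z i j s e1 e2 e3 e4
        rcases List.mem_cons.mp hp with rfl | hp <;>
          rcases List.mem_cons.mp hp' with rfl | hp'
        · exact absurd ((pair_inj (e3 :
            ((y.1, jf) : (EFU M w K q).World) = _)).2) hf0
        · constructor
          · intro hi0 _
            have hi : i = jf := (pair_inj (e1 :
              ((y.1, jf) : (EFU M w K q).World) = (z, i))).2.symm
            exact (hf0 (hi.symm.trans hi0)).elim
          · intro hj0 hn
            rcases hcl p' hp' with ⟨s₃, k1, k2, k3⟩ | ⟨zz, ii, jj, k1, k2⟩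
            · have hs3 : s₃ = s := Sum.inl.inj (Sum.inl.inj ((pair_inj
                (k1.symm.trans e3)).1))
              subst hs3
              exact hA ⟨p', hp', s₃, k1, k2, k3, by
                rw [k2, show y = (z, j) from e2]
                exact (e4.symm.trans k2) ▸ hn⟩
            · exact (rc_far_absurd M w K q e3 e4 k1 k2).elim
        · exact absurd ((pair_inj (e3 :
            ((y.1, jf) : (EFU M w K q).World) = _)).2) hf0
        · have old := hC3 p hp p' hp' z i j s e1 e2 e3 e4
          exact ⟨fun a hn => old.1 a (hmono _ _ hn), fun a hn => old.2 a (hmono _ _ hn)⟩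

lemma ef_induct {k : ℕ} (β : FO n k) : ∀ (r : ℕ), β.qr ≤ r →
    ∀ P, Inv M w K q r P → ∀ (aX aY : Fin k → (EFU M w K q).World),
    (∀ i, (aX i, aY i) ∈ P) →
    (FO.Realize (EFU M w K q) β aX ↔ FO.Realize (EFU M w K q) β aY) := by
  induction β with
  | pred p xv =>
      intro r hqr P hP aX aY ha
      exact inv_V M w K q hP (ha xv) p
  | rel ts =>
      intro r hqr P hP aX aY ha
      exact inv_R M w K q hP (p₀ := (aX (ts 0), aY (ts 0))) (ha (ts 0))
        (pv := fun i => (aX (ts i.succ), aY (ts i.succ))) (fun i => ha (ts i.succ))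
  | eq xv yv =>
      intro r hqr P hP aX aY ha
      exact inv_eq M w K q hP (p := (aX xv, aY xv)) (p' := (aX yv, aY yv)) (ha xv) (ha yv)
  | fal =>
      intro r hqr P hP aX aY ha
      exact Iff.rfl
  | not φ ih =>
      intro r hqr P hP aX aY ha
      exact not_congr (ih r hqr P hP aX aY ha)
  | and φ ψ ih₁ ih₂ =>
      intro r hqr P hP aX aY ha
      exact and_congr (ih₁ r (le_trans (le_max_left _ _) hqr) P hP aX aY ha)
        (ih₂ r (le_trans (le_max_right _ _) hqr) P hP aX aY ha)
  | or φ ψ ih₁ ih₂ =>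
      intro r hqr P hP aX aY ha
      exact or_congr (ih₁ r (le_trans (le_max_left _ _) hqr) P hP aX aY ha)
        (ih₂ r (le_trans (le_max_right _ _) hqr) P hP aX aY ha)
  | imp φ ψ ih₁ ih₂ =>
      intro r hqr P hP aX aY ha
      exact imp_congr (ih₁ r (le_trans (le_max_left _ _) hqr) P hP aX aY ha)
        (ih₂ r (le_trans (le_max_right _ _) hqr) P hP aX aY ha)
  | all φ ih =>
      intro r hqr P hP aX aY ha
      cases r with
      | zero =>
          have h0 : φ.qr + 1 ≤ 0 := hqr
          omega
      | succ r' =>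
          have hq' : φ.qr ≤ r' := by
            have h1 : φ.qr + 1 ≤ r' + 1 := hqr
            omega
          constructor
          · intro hall u
            obtain ⟨x', hInv⟩ := ext_b M w K q hP u
            refine (ih r' hq' _ hInv (Fin.snoc aX x') (Fin.snoc aY u) ?_).mp (hall x')
            intro i
            refine Fin.lastCases ?_ (fun i' => ?_) i
            · rw [Fin.snoc_last, Fin.snoc_last]
              exact List.mem_cons_self
            · rw [Fin.snoc_castSucc, Fin.snoc_castSucc]
              exact List.mem_cons_of_mem _ (ha i')
          · intro hall u
            obtain ⟨y', hInv⟩ := ext_a M w K q hP u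
            refine (ih r' hq' _ hInv (Fin.snoc aX u) (Fin.snoc aY y') ?_).mpr (hall y')
            intro i
            refine Fin.lastCases ?_ (fun i' => ?_) i
            · rw [Fin.snoc_last, Fin.snoc_last]
              exact List.mem_cons_self
            · rw [Fin.snoc_castSucc, Fin.snoc_castSucc]
              exact List.mem_cons_of_mem _ (ha i')

lemma inv_init : Inv M w K q q
    [(EFaT M w K q (EFRoot M w K q) 0, EFbT M w K q (EFRoot M w K q) 0)] := by
  have hroot1 : (EFRoot M w K q).val.length = 1 := rfl
  refine ⟨List.mem_cons_self, by simp only [List.length_singleton]; omega, ?_, ?_, ?_⟩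
  · intro p hp
    rw [List.mem_singleton] at hp
    subst hp
    exact Or.inl ⟨EFRoot M w K q, rfl, rfl, by omega⟩
  · intro p hp p' hp' z i j z' i' j' e1 e2 e3 e4
    rw [List.mem_singleton] at hp
    subst hp
    exact (rc_far_absurd M w K q rfl rfl e1 e2).elim
  · intro p hp p' hp' z i j s e1 e2 e3 e4
    rw [List.mem_singleton] at hp
    subst hp
    exact (rc_far_absurd M w K q rfl rfl e1 e2).elim

end EF2

section MainChain
variable {n : ℕ}

/-- The locality step (Otto-style Ehrenfeucht–Fraïssé argument): a formula of quantifier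
rank ≤ q cannot distinguish the root of the grafted tree from the root of the truncated
tree, inside the comparison structure with spare copies. -/
lemma ef_core (M : NModel n) [NeZero n] (w : M.World) (K q : ℕ)
    (α : FO n 1) (hqr : α.qr ≤ q) :
    FO.Realize (UModel M w K (2^q) q) α
      (fun _ => (Sum.inl (Sum.inl (unravelBRoot (capV M K) w (2^q))), 0)) ↔
    FO.Realize (UModel M w K (2^q) q) α
      (fun _ => (Sum.inr (unravelBRoot (capV M K) w (2^q)), 0)) := by
  exact ef_induct M w K q α q hqr _ (inv_init M w K q)
    (fun _ => EFaT M w K q (EFRoot M w K q) 0) (fun _ => EFbT M w K q (EFRoot M w K q) 0)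
    (fun _ => List.mem_cons_self)

lemma graft_finite (M : NModel n) [NeZero n] [Finite M.World] (w : M.World) (K l : ℕ) :
    Finite (Graft M w K l).World := by
  haveI := unravelB_finite (capV M K) w l
  exact inferInstance

/-- One side of the chain: over finite models, a bisimulation-invariant formula holds at w
iff it holds at the root of the truncated tree. -/
lemma side_chain (α : FO n 1) (hinv : BisimInvariantFin n α) {K : ℕ} (hK : α.PredsLT K)
    (q : ℕ) (hqr : α.qr ≤ q) (M : NModel n) [NeZero n] [Finite M.World] (w : M.World) :
    FO.Realize M α (fun _ => w) ↔
    FO.Realize (TBmod M w K (2^q)) α (fun _ => unravelBRoot (capV M K) w (2^q)) := by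
  set l := 2^q with hl
  haveI := unravelB_finite (capV M K) w l
  haveI := graft_finite M w K l
  have step1 : FO.Realize M α (fun _ => w) ↔ FO.Realize (capV M K) α (fun _ => w) :=
    realize_capV α hK _
  have step2 : FO.Realize (capV M K) α (fun _ => w) ↔
      FO.Realize (Graft M w K l) α (fun _ => Sum.inl (unravelBRoot (capV M K) w l)) :=
    hinv (capV M K) (Graft M w K l) _ w _ inferInstance inferInstance
      (isBisim_graft M w K l) (Or.inl ⟨_, rfl, rfl⟩)
  have step3 : FO.Realize (Graft M w K l) α (fun _ => Sum.inl (unravelBRoot (capV M K) w l)) ↔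
      FO.Realize (UModel M w K l q) α
        (fun _ => (Sum.inl (Sum.inl (unravelBRoot (capV M K) w l)), 0)) := by
    refine hinv (Graft M w K l) (UModel M w K l q) _ _ _ inferInstance inferInstance
      (isBisim_comp (isBisim_inl (Graft M w K l) (TBmod M w K l))
        (isBisim_pcopies (DSum (Graft M w K l) (TBmod M w K l)) (q+1))
        rfl (rfl : ((Sum.inl (Sum.inl (unravelBRoot (capV M K) w l)) :
          (DSum (Graft M w K l) (TBmod M w K l)).World), (0 : Fin (q+2))).1 = _))
      ⟨_, rfl, rfl⟩
  have step5 : FO.Realize (TBmod M w K l) α (fun _ => unravelBRoot (capV M K) w l) ↔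
      FO.Realize (UModel M w K l q) α
        (fun _ => (Sum.inr (unravelBRoot (capV M K) w l), 0)) := by
    refine hinv (TBmod M w K l) (UModel M w K l q) _ _ _ inferInstance inferInstance
      (isBisim_comp (isBisim_inr (Graft M w K l) (TBmod M w K l))
        (isBisim_pcopies (DSum (Graft M w K l) (TBmod M w K l)) (q+1))
        (rfl : (Sum.inr (unravelBRoot (capV M K) w l) :
          (DSum (Graft M w K l) (TBmod M w K l)).World) = Sum.inr _)
        (rfl : ((Sum.inr (unravelBRoot (capV M K) w l) :
          (DSum (Graft M w K l) (TBmod M w K l)).World), (0 : Fin (q+2))).1 = _))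
      ⟨_, rfl, rfl⟩
  rw [step1, step2, step3, ef_core M w K q α hqr, ← step5]

/-- The core upgrading lemma: over finite models, a bisimulation-invariant formula of
quantifier rank ≤ q depends only on the depth-2^q type. -/
lemma key_core (α : FO n 1) (hinv : BisimInvariantFin n α) {K : ℕ} (hK : α.PredsLT K)
    (q : ℕ) (hqr : α.qr ≤ q) (M N : NModel n) [Finite M.World] [Finite N.World]
    (w : M.World) (v : N.World) (hn : 1 ≤ n)
    (hty : typeOf K M (2^q) w = typeOf K N (2^q) v) :
    (FO.Realize M α (fun _ => w) ↔ FO.Realize N α (fun _ => v)) := by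
  haveI : NeZero n := ⟨by omega⟩
  set l := 2^q with hl
  haveI := unravelB_finite (capV M K) w l
  haveI := unravelB_finite (capV N K) v l
  rw [side_chain α hinv hK q hqr M w, side_chain α hinv hK q hqr N v]
  refine hinv (TBmod M w K l) (TBmod N v K l) _ _ _ inferInstance inferInstance
    (isBisim_typed w v K l hty) ⟨rfl, ?_⟩
  show typeOf K M (l + 1 - 1) w = typeOf K N (l + 1 - 1) v
  simpa using hty

end MainChain


/-- Rosen-style characterization of WAML^n over finite n-models. -/
theorem rosen_characterization (n : ℕ) (hn : 1 ≤ n) (α : FO n 1) :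
    BisimInvariantFin n α ↔
    ∃ φ : Formula, ∀ (M : NModel n) (w : M.World), Finite M.World →
      (FO.Realize M α (fun _ => w) ↔ FO.Realize M (ST n φ) (fun _ => w)) := by
  constructor
  · intro hinv
    obtain ⟨K, hK⟩ := exists_predsLT α
    set q := α.qr with hq
    set l := 2^q with hl
    haveI : NeZero n := ⟨by omega⟩
    obtain ⟨χ, hχ⟩ := chi_exists (n := n) K l
    set D : Set (MType K l) := {c | ∃ (M : NModel n) (_ : Finite M.World) (w : M.World),
      typeOf K M l w = c ∧ FO.Realize M α (fun _ => w)} with hD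
    obtain ⟨LD, hLD⟩ := exists_enum_set D
    refine ⟨disjList (LD.map χ), ?_⟩
    intro M w hfin
    haveI := hfin
    rw [st_correct, sat_disjList]
    constructor
    · intro hα
      exact ⟨χ (typeOf K M l w), List.mem_map.mpr ⟨_,
        (hLD _).mpr ⟨M, hfin, w, rfl, hα⟩, rfl⟩, (hχ M w _).mpr rfl⟩
    · rintro ⟨ψ, hmem, hψ⟩
      obtain ⟨c, hc, rfl⟩ := List.mem_map.mp hmem
      obtain ⟨N, hNfin, v, hty, hαv⟩ := (hLD c).mp hc
      haveI := hNfin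
      have htyeq : typeOf K M l w = typeOf K N l v := by
        rw [(hχ M w c).mp hψ, hty]
      exact (key_core α hinv hK q le_rfl M N w v hn htyeq).mpr hαv
  · rintro ⟨φ, hφ⟩ M N Z w v hM hN hZ hzwv
    rw [hφ M w hM, hφ N v hN, st_correct, st_correct]
    exact sat_bisim hZ φ w v hzwv

end WAML
end

section
/- There exist pointed 2-models M,w and N,v such that, with φ₂ = □(¬p ∨ ¬q) ∧ ◇q and ψ₂ = □(p ∧ r) ∧ □(p ∧ ¬r): M,w ⊨ φ₂, N,v ⊨ ψ₂, and for every WAML formula γ containing no propositional letter other than p, M,w ⊨ γ iff N,v ⊨ γ. (Concretely one may take M with worlds w,w₁,w₂,w₃,w₄, ternary relation {(w,w₁,w₂),(w,w₃,w₄)}, and valuation making p true at w₁,w₂,w₃ and q true at w₃,w₄ only; and N with worlds v,v₁,v₂, ternary relation {(v,v₁,v₂)}, and valuation making p true at v₁,v₂ and r true at v₂ only.) -/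
namespace WAML

/-- The model M: world 0 = w, 1..4 = w₁..w₄. -/
def Mdl : NModel 2 where
  World := Fin 5
  nonempty := ⟨0⟩
  R := fun x t => x = 0 ∧ ((t 0 = 1 ∧ t 1 = 2) ∨ (t 0 = 3 ∧ t 1 = 4))
  V := fun x p => (p = 0 ∧ (x = 1 ∨ x = 2 ∨ x = 3)) ∨ (p = 1 ∧ (x = 3 ∨ x = 4))

/-- The model N: world 0 = v, 1 = v₁, 2 = v₂. -/
def Ndl : NModel 2 where
  World := Fin 3
  nonempty := ⟨0⟩
  R := fun x t => x = 0 ∧ t 0 = 1 ∧ t 1 = 2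
  V := fun x p => (p = 0 ∧ (x = 1 ∨ x = 2)) ∨ (p = 2 ∧ x = 2)

lemma satM_box_iff (γ : Formula) :
    Sat Mdl ((0 : Fin 5) : Mdl.World) (Formula.box γ) ↔
      (Sat Mdl ((1 : Fin 5) : Mdl.World) γ ∨ Sat Mdl ((2 : Fin 5) : Mdl.World) γ) ∧ (Sat Mdl ((3 : Fin 5) : Mdl.World) γ ∨ Sat Mdl ((4 : Fin 5) : Mdl.World) γ) := by
  constructor
  · intro h
    constructor
    · obtain ⟨i, hi⟩ := h (![1, 2] : Fin 2 → Fin 5) ⟨rfl, Or.inl ⟨rfl, rfl⟩⟩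
      fin_cases i
      · exact Or.inl hi
      · exact Or.inr hi
    · obtain ⟨i, hi⟩ := h (![3, 4] : Fin 2 → Fin 5) ⟨rfl, Or.inr ⟨rfl, rfl⟩⟩
      fin_cases i
      · exact Or.inl hi
      · exact Or.inr hi
  · rintro ⟨h1, h2⟩ t ⟨-, ⟨ht0, ht1⟩ | ⟨ht0, ht1⟩⟩
    · rcases h1 with h | h
      · exact ⟨0, ht0 ▸ h⟩
      · exact ⟨1, ht1 ▸ h⟩
    · rcases h2 with h | h
      · exact ⟨0, ht0 ▸ h⟩
      · exact ⟨1, ht1 ▸ h⟩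

lemma satN_box_iff (γ : Formula) :
    Sat Ndl ((0 : Fin 3) : Ndl.World) (Formula.box γ) ↔ (Sat Ndl ((1 : Fin 3) : Ndl.World) γ ∨ Sat Ndl ((2 : Fin 3) : Ndl.World) γ) := by
  constructor
  · intro h
    obtain ⟨i, hi⟩ := h (![1, 2] : Fin 2 → Fin 3) ⟨rfl, rfl, rfl⟩
    fin_cases i
    · exact Or.inl hi
    · exact Or.inr hi
  · rintro h t ⟨-, ht0, ht1⟩
    rcases h with h | h
    · exact ⟨0, ht0 ▸ h⟩
    · exact ⟨1, ht1 ▸ h⟩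

lemma satM_dead (x : Fin 5) (hx : x ≠ 0) (γ : Formula) : Sat Mdl x (Formula.box γ) := by
  rintro t ⟨rfl, -⟩
  exact absurd rfl hx

lemma satN_dead (x : Fin 3) (hx : x ≠ 0) (γ : Formula) : Sat Ndl x (Formula.box γ) := by
  rintro t ⟨rfl, -⟩
  exact absurd rfl hx

lemma key (γ : Formula) (hγ : γ.letters ⊆ {0}) :
    (Sat Mdl ((1 : Fin 5) : Mdl.World) γ ↔ Sat Ndl ((1 : Fin 3) : Ndl.World) γ) ∧ (Sat Mdl ((2 : Fin 5) : Mdl.World) γ ↔ Sat Ndl ((1 : Fin 3) : Ndl.World) γ) ∧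
    (Sat Mdl ((3 : Fin 5) : Mdl.World) γ ↔ Sat Ndl ((1 : Fin 3) : Ndl.World) γ) ∧ (Sat Ndl ((2 : Fin 3) : Ndl.World) γ ↔ Sat Ndl ((1 : Fin 3) : Ndl.World) γ) ∧
    (Sat Mdl ((0 : Fin 5) : Mdl.World) γ ↔ Sat Ndl ((0 : Fin 3) : Ndl.World) γ) := by
  induction γ with
  | atom p =>
      have hp : p = 0 := hγ rfl
      subst hp
      simp [Sat, Mdl, Ndl]
  | neg φ ih =>
      obtain ⟨h1, h2, h3, h4, h5⟩ := ih hγ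
      exact ⟨not_congr h1, not_congr h2, not_congr h3, not_congr h4, not_congr h5⟩
  | and φ ψ ihφ ihψ =>
      have hφ : φ.letters ⊆ {0} := fun x hx => hγ (Or.inl hx)
      have hψ : ψ.letters ⊆ {0} := fun x hx => hγ (Or.inr hx)
      obtain ⟨h1, h2, h3, h4, h5⟩ := ihφ hφ
      obtain ⟨g1, g2, g3, g4, g5⟩ := ihψ hψ
      exact ⟨and_congr h1 g1, and_congr h2 g2, and_congr h3 g3,
        and_congr h4 g4, and_congr h5 g5⟩
  | box φ ih =>
      obtain ⟨h1, h2, h3, h4, -⟩ := ih hγ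
      refine ⟨?_, ?_, ?_, ?_, ?_⟩
      · exact iff_of_true (satM_dead ((1:Fin 5)) (by decide) φ) (satN_dead ((1:Fin 3)) (by decide) φ)
      · exact iff_of_true (satM_dead ((2:Fin 5)) (by decide) φ) (satN_dead ((1:Fin 3)) (by decide) φ)
      · exact iff_of_true (satM_dead ((3:Fin 5)) (by decide) φ) (satN_dead ((1:Fin 3)) (by decide) φ)
      · exact iff_of_true (satN_dead ((2:Fin 3)) (by decide) φ) (satN_dead ((1:Fin 3)) (by decide) φ)
      · rw [satM_box_iff, satN_box_iff]
        constructor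
        · rintro ⟨hA, -⟩
          rcases hA with h | h
          · exact Or.inl (h1.mp h)
          · exact Or.inl (h2.mp h)
        · intro h
          have hA : Sat Ndl ((1 : Fin 3) : Ndl.World) φ := by
            rcases h with h | h
            · exact h
            · exact h4.mp h
          exact ⟨Or.inl (h1.mpr hA), Or.inl (h3.mpr hA)⟩

/-- there are pointed 2-models M,w ⊨ φ₂ and N,v ⊨ ψ₂ that agree on all WAML
formulas whose only propositional letter is p (p = atom 0, q = atom 1, r = atom 2). -/
theorem counterexample_models_K2 :
    ∃ (M N : NModel 2) (w : M.World) (v : N.World),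
      Sat M w (Formula.and
        (Formula.box (Formula.or (Formula.neg (Formula.atom 0)) (Formula.neg (Formula.atom 1))))
        (Formula.dia (Formula.atom 1))) ∧
      Sat N v (Formula.and
        (Formula.box (Formula.and (Formula.atom 0) (Formula.atom 2)))
        (Formula.box (Formula.and (Formula.atom 0) (Formula.neg (Formula.atom 2))))) ∧
      (∀ γ : Formula, γ.letters ⊆ {0} → (Sat M w γ ↔ Sat N v γ)) := by
  refine ⟨Mdl, Ndl, (0 : Fin 5), (0 : Fin 3), ⟨?_, ?_⟩, ⟨?_, ?_⟩, fun γ hγ => (key γ hγ).2.2.2.2⟩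
  · rw [satM_box_iff]
    constructor
    · left
      show ¬ (¬ ¬ Sat Mdl ((1 : Fin 5) : Mdl.World) (.atom 0) ∧ ¬ ¬ Sat Mdl ((1 : Fin 5) : Mdl.World) (.atom 1))
      rintro ⟨-, h⟩
      exact h (by simp [Sat, Mdl])
    · right
      show ¬ (¬ ¬ Sat Mdl ((4 : Fin 5) : Mdl.World) (.atom 0) ∧ ¬ ¬ Sat Mdl ((4 : Fin 5) : Mdl.World) (.atom 1))
      rintro ⟨h, -⟩
      exact h (by simp [Sat, Mdl])
  · show ¬ Sat Mdl ((0 : Fin 5) : Mdl.World) (Formula.box (Formula.neg (Formula.atom 1)))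
    rw [satM_box_iff]
    rintro ⟨-, h | h⟩ <;> exact h (by simp [Sat, Mdl])
  · rw [satN_box_iff]
    exact Or.inr (by simp [Sat, Ndl])
  · rw [satN_box_iff]
    refine Or.inl ⟨by simp [Sat, Ndl], ?_⟩
    show ¬ Sat Ndl ((1 : Fin 3) : Ndl.World) (.atom 2)
    simp [Sat, Ndl]

end WAML
end

section
/- Let n ≥ 3 and let ρ₁,…,ρ_{n−1} be conjunctions of literals over propositional letters r₁,…,r_m (distinct from p and q) such that ρ_i ∧ ρ_{i'} is propositionally unsatisfiable whenever i ≠ i'. Then 𝕂_n ⊢ (□(p ∧ ¬q) ∧ □(p ∧ q) ∧ ⋀_{i=1}^{n−1} □(¬p ∧ ρ_i)) → □⊥. -/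
namespace WAML

section Aux

lemma val_imp (v : Formula → Prop) (hneg : ∀ ψ, v (Formula.neg ψ) ↔ ¬ v ψ)
    (hand : ∀ ψ χ, v (Formula.and ψ χ) ↔ v ψ ∧ v χ) (φ ψ : Formula) :
    v (Formula.imp φ ψ) ↔ (v φ → v ψ) := by
  simp only [Formula.imp, hneg, hand]; tauto

lemma val_or (v : Formula → Prop) (hneg : ∀ ψ, v (Formula.neg ψ) ↔ ¬ v ψ)
    (hand : ∀ ψ χ, v (Formula.and ψ χ) ↔ v ψ ∧ v χ) (φ ψ : Formula) :
    v (Formula.or φ ψ) ↔ (v φ ∨ v ψ) := by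
  simp only [Formula.or, hneg, hand]; tauto

lemma val_conjList (v : Formula → Prop) (hneg : ∀ ψ, v (Formula.neg ψ) ↔ ¬ v ψ)
    (hand : ∀ ψ χ, v (Formula.and ψ χ) ↔ v ψ ∧ v χ) :
    ∀ L : List Formula, v (conjList L) ↔ ∀ φ ∈ L, v φ
  | [] => by simp only [conjList, Formula.bot, hneg, hand, List.not_mem_nil,
      false_implies, implies_true, iff_true]; tauto
  | [φ] => by simp [conjList]
  | φ :: ψ :: rest => by
    simp only [conjList, hand, val_conjList v hneg hand (ψ :: rest), List.mem_cons]
    constructor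
    · rintro ⟨h1, h2⟩ χ (rfl | h) <;> [exact h1; exact h2 χ h]
    · intro h; exact ⟨h φ (Or.inl rfl), fun χ hχ => h χ (Or.inr hχ)⟩

lemma val_disjList (v : Formula → Prop) (hneg : ∀ ψ, v (Formula.neg ψ) ↔ ¬ v ψ)
    (hand : ∀ ψ χ, v (Formula.and ψ χ) ↔ v ψ ∧ v χ) :
    ∀ L : List Formula, v (disjList L) ↔ ∃ φ ∈ L, v φ
  | [] => by simp only [disjList, Formula.bot, hand, hneg, List.not_mem_nil,
      false_and, exists_false, iff_false]; tauto
  | [φ] => by simp [disjList]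
  | φ :: ψ :: rest => by
    simp only [disjList, val_or v hneg hand, val_disjList v hneg hand (ψ :: rest),
      List.mem_cons]
    constructor
    · rintro (h | ⟨χ, hχ, hv⟩)
      · exact ⟨φ, Or.inl rfl, h⟩
      · exact ⟨χ, Or.inr hχ, hv⟩
    · rintro ⟨χ, (rfl | hχ), hv⟩
      · exact Or.inl hv
      · exact Or.inr ⟨χ, hχ, hv⟩

lemma KProof.imp_trans {n : ℕ} {A B C : Formula}
    (h1 : KProof n (Formula.imp A B)) (h2 : KProof n (Formula.imp B C)) :
    KProof n (Formula.imp A C) := by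
  have t : Tautology (Formula.imp (Formula.imp A B)
      (Formula.imp (Formula.imp B C) (Formula.imp A C))) := by
    intro v hneg hand
    simp only [val_imp v hneg hand]; tauto
  exact KProof.mp (KProof.mp (KProof.taut t) h1) h2

/-- The family of n+1 formulas used in the Kₙ instance. -/
def phiFam (n : ℕ) (hn : 3 ≤ n) (ρ : Fin (n-1) → Formula) (i : Fin (n+1)) : Formula :=
  if (i : ℕ) = 0 then Formula.and (Formula.atom 0) (Formula.neg (Formula.atom 1))
  else if (i : ℕ) = 1 then Formula.and (Formula.atom 0) (Formula.atom 1)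
  else Formula.and (Formula.neg (Formula.atom 0))
    (ρ ⟨(i : ℕ) - 2, by have := i.isLt; omega⟩)

end Aux

/-- for n ≥ 3 and pairwise propositionally incompatible conjunctions of
literals ρ₁,…,ρ_{n−1} over r₁,…,r_m (atoms 2,…,m+1, distinct from p = atom 0 and
q = atom 1), 𝕂_n derives (□(p ∧ ¬q) ∧ □(p ∧ q) ∧ ⋀ᵢ □(¬p ∧ ρᵢ)) → □⊥. -/
theorem general_counterexample_derivation (n m : ℕ) (hn : 3 ≤ n)
    (ρ : Fin (n-1) → Formula)
    (hlits : ∀ i, IsConjLits m (ρ i))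
    (hincomp : ∀ i i', i ≠ i' → Tautology (Formula.neg (Formula.and (ρ i) (ρ i')))) :
    KProof n (Formula.imp
      (Formula.and (Formula.and
        (Formula.box (Formula.and (Formula.atom 0) (Formula.neg (Formula.atom 1))))
        (Formula.box (Formula.and (Formula.atom 0) (Formula.atom 1))))
        (conjList ((List.finRange (n-1)).map
          (fun i => Formula.box (Formula.and (Formula.neg (Formula.atom 0)) (ρ i))))))
      (Formula.box Formula.bot)) := by
  set φ := phiFam n hn ρ with hφ
  -- Step 1: the Kₙ instance
  have hKn : KProof n (Formula.imp
      (conjList ((List.finRange (n+1)).map (fun i => Formula.box (φ i))))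
      (Formula.box (pairDisj n φ))) := KProof.kn φ
  -- Step 2: the antecedent implies the Kₙ antecedent (a tautology)
  have h4 : Tautology (Formula.imp
      (Formula.and (Formula.and
        (Formula.box (Formula.and (Formula.atom 0) (Formula.neg (Formula.atom 1))))
        (Formula.box (Formula.and (Formula.atom 0) (Formula.atom 1))))
        (conjList ((List.finRange (n-1)).map
          (fun i => Formula.box (Formula.and (Formula.neg (Formula.atom 0)) (ρ i))))))
      (conjList ((List.finRange (n+1)).map (fun i => Formula.box (φ i))))) := by
    intro v hneg hand
    rw [val_imp v hneg hand]
    intro hA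
    rw [hand, hand, val_conjList v hneg hand] at hA
    rw [val_conjList v hneg hand]
    intro ψ hmem
    rw [List.mem_map] at hmem
    obtain ⟨i, -, rfl⟩ := hmem
    simp only [hφ, phiFam]
    split_ifs with h0 h1
    · exact hA.1.1
    · exact hA.1.2
    · exact hA.2 _ (List.mem_map.mpr ⟨⟨(i : ℕ) - 2, by have := i.isLt; omega⟩,
        List.mem_finRange _, rfl⟩)
  -- Step 3: the pair-disjunction is tautologically contradictory
  have h2 : Tautology (Formula.imp (pairDisj n φ) Formula.bot) := by
    intro v hneg hand
    rw [val_imp v hneg hand]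
    intro hd
    exfalso
    rw [pairDisj, val_disjList v hneg hand] at hd
    obtain ⟨ψ, hmem, hv⟩ := hd
    rw [List.mem_filterMap] at hmem
    obtain ⟨⟨i, j⟩, -, hf⟩ := hmem
    by_cases hij : i < j
    · simp only [hij, if_true, Option.some.injEq] at hf
      subst hf
      rw [hand] at hv
      obtain ⟨hvi, hvj⟩ := hv
      have hij' : (i : ℕ) < (j : ℕ) := hij
      simp only [hφ, phiFam] at hvi hvj
      split_ifs at hvi hvj with hi0 hi1 hj0 hj0 hj1 hj1 <;>
        simp only [hand, hneg] at hvi hvj <;> try omega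
      all_goals
        first
        | exact hvj.1 hvi.1
        | exact hvi.1 hvj.1
        | exact hvi.2 hvj.2
        | exact hvj.2 hvi.2
        | (have hne : (⟨(i : ℕ) - 2, by have := i.isLt; omega⟩ : Fin (n-1)) ≠
              ⟨(j : ℕ) - 2, by have := j.isLt; omega⟩ := by
            simp only [ne_eq, Fin.mk.injEq]; omega
           have := hincomp _ _ hne v hneg hand
           rw [hneg, hand] at this
           exact this ⟨hvi.2, hvj.2⟩)
    · simp [hij] at hf
  -- Step 4: assemble via RM and transitivity
  exact KProof.imp_trans (KProof.imp_trans (KProof.taut h4) hKn)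
    (KProof.rm (KProof.taut h2))

end WAML
end
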